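/- arXiv:2406.08779 — 5 statements merged into one kernel-verified Lean document; each statement's English description precedes it below -/
import Mathlib

section
/- Let K be a closed subset of the closed unit ball D^n containing the boundary sphere S^{n-1}, and let 𝒰 be the set of connected components of D^n ∖ K. Then the following are equivalent: (1) every sequence of pairwise distinct elements of 𝒰 has a subsequence whose limit (set of limits of sequences of points chosen from the sets) is a single point; (2) for every δ > 0, only finitely many elements of 𝒰 have diameter greater than δ. -/
/-- The limit set of a sequence of subsets: all limits of convergent sequences of points
chosen from the sets. -/
def seqSetLimit {X : Type*} [MetricSpace X] (U : ℕ → Set X) : Set X :=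
  {p | ∃ x : ℕ → X, (∀ m, x m ∈ U m) ∧ Filter.Tendsto x Filter.atTop (nhds p)}

/-- Let `K` be a closed subset of the closed unit ball `Dⁿ` containing the unit sphere,
and let `𝒰` be the set of connected components of `Dⁿ ∖ K`.  Then: every sequence of
pairwise distinct elements of `𝒰` has a subsequence whose limit set is a single point,
iff for every `δ > 0` only finitely many elements of `𝒰` have diameter greater
than `δ`. -/
theorem stmt1 (n : ℕ) (K : Set (EuclideanSpace ℝ (Fin n)))
    (hKcl : IsClosed K) (hKD : K ⊆ Metric.closedBall 0 1)
    (hS : Metric.sphere (0 : EuclideanSpace ℝ (Fin n)) 1 ⊆ K)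
    (𝒰 : Set (Set (EuclideanSpace ℝ (Fin n))))
    (h𝒰 : 𝒰 = {C | ∃ x ∈ Metric.closedBall (0 : EuclideanSpace ℝ (Fin n)) 1 \ K,
      C = connectedComponentIn (Metric.closedBall (0 : EuclideanSpace ℝ (Fin n)) 1 \ K) x}) :
    (∀ U : ℕ → Set (EuclideanSpace ℝ (Fin n)), (∀ m, U m ∈ 𝒰) → Function.Injective U →
      ∃ φ : ℕ → ℕ, StrictMono φ ∧ ∃ p, seqSetLimit (fun k => U (φ k)) = {p}) ↔
    (∀ δ : ℝ, 0 < δ → {C ∈ 𝒰 | δ < Metric.diam C}.Finite) := by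
  have hDc : IsCompact (Metric.closedBall (0 : EuclideanSpace ℝ (Fin n)) 1) :=
    isCompact_closedBall _ _
  have hsub : ∀ C ∈ 𝒰, C ⊆ Metric.closedBall (0 : EuclideanSpace ℝ (Fin n)) 1 := by
    intro C hC
    rw [h𝒰] at hC
    obtain ⟨x, hx, rfl⟩ := hC
    exact (connectedComponentIn_subset _ _).trans Set.diff_subset
  have hne : ∀ C ∈ 𝒰, C.Nonempty := by
    intro C hC
    rw [h𝒰] at hC
    obtain ⟨x, hx, rfl⟩ := hC
    exact ⟨x, mem_connectedComponentIn hx⟩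
  constructor
  · intro h1 δ hδ
    by_contra hinf
    have hinf' : {C ∈ 𝒰 | δ < Metric.diam C}.Infinite := hinf
    obtain f := hinf'.natEmbedding
    set U : ℕ → Set (EuclideanSpace ℝ (Fin n)) := fun m => (f m : Set _) with hUdef
    have hUmem : ∀ m, U m ∈ 𝒰 := fun m => (f m).2.1
    have hUdiam : ∀ m, δ < Metric.diam (U m) := fun m => (f m).2.2
    have hUinj : Function.Injective U := fun a b h => f.injective (Subtype.ext h)
    have hpair : ∀ m, ∃ x ∈ U m, ∃ y ∈ U m, δ < dist x y := by
      intro m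
      by_contra hc
      push_neg at hc
      exact absurd (Metric.diam_le_of_forall_dist_le hδ.le hc) (not_le.2 (hUdiam m))
    choose x hx y hy hxy using hpair
    obtain ⟨q, hq, ψ1, hψ1, hxq⟩ := hDc.tendsto_subseq (fun m => hsub _ (hUmem m) (hx m))
    obtain ⟨r, hr, ψ2, hψ2, hyr⟩ := hDc.tendsto_subseq
      (fun m => hsub _ (hUmem (ψ1 m)) (hy (ψ1 m)))
    obtain ⟨φ, hφ, p, hp⟩ := h1 (fun k => U (ψ1 (ψ2 k))) (fun k => hUmem _)
      (hUinj.comp (hψ1.injective.comp hψ2.injective))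
    have hq' : q ∈ seqSetLimit (fun k => U (ψ1 (ψ2 (φ k)))) :=
      ⟨fun k => x (ψ1 (ψ2 (φ k))), fun k => hx _,
        ((hxq.comp hψ2.tendsto_atTop).comp hφ.tendsto_atTop)⟩
    have hr' : r ∈ seqSetLimit (fun k => U (ψ1 (ψ2 (φ k)))) :=
      ⟨fun k => y (ψ1 (ψ2 (φ k))), fun k => hy _, (hyr.comp hφ.tendsto_atTop)⟩
    rw [hp, Set.mem_singleton_iff] at hq' hr'
    have hqr : q = r := hq'.trans hr'.symm
    have hdist : Filter.Tendsto
        (fun k => dist (x (ψ1 (ψ2 k))) (y (ψ1 (ψ2 k)))) Filter.atTop (nhds (dist q r)) :=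
      Filter.Tendsto.dist (hxq.comp hψ2.tendsto_atTop) hyr
    have hle : δ ≤ dist q r :=
      le_of_tendsto_of_tendsto' tendsto_const_nhds hdist (fun k => (hxy _).le)
    rw [hqr, dist_self] at hle
    linarith
  · intro h2 U hU hUinj
    choose c hc using fun m => hne _ (hU m)
    obtain ⟨p, hp, φ, hφ, hcp⟩ := hDc.tendsto_subseq (fun m => hsub _ (hU m) (hc m))
    refine ⟨φ, hφ, p, ?_⟩
    have hdiam0 : Filter.Tendsto (fun m => Metric.diam (U m)) Filter.atTop (nhds 0) := by
      rw [Metric.tendsto_atTop]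
      intro ε hε
      have hfin : {m | ε/2 < Metric.diam (U m)}.Finite := by
        refine ((h2 (ε/2) (by linarith)).preimage hUinj.injOn).subset ?_
        intro m hm
        exact ⟨hU m, hm⟩
      have hev : ∀ᶠ m in Filter.atTop, m ∉ {m | ε/2 < Metric.diam (U m)} := by
        rw [← Nat.cofinite_eq_atTop]
        exact Set.Finite.eventually_cofinite_notMem hfin
      rw [Filter.eventually_atTop] at hev
      obtain ⟨N, hN⟩ := hev
      refine ⟨N, fun m hm => ?_⟩
      have := hN m hm
      simp only [Set.mem_setOf_eq, not_lt] at this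
      rw [Real.dist_eq, sub_zero, abs_of_nonneg Metric.diam_nonneg]
      linarith
    have key : ∀ z : ℕ → EuclideanSpace ℝ (Fin n), (∀ k, z k ∈ U (φ k)) →
        Filter.Tendsto z Filter.atTop (nhds p) := by
      intro z hz
      rw [tendsto_iff_dist_tendsto_zero]
      have hb : ∀ k, dist (z k) p ≤ Metric.diam (U (φ k)) + dist (c (φ k)) p := by
        intro k
        calc dist (z k) p ≤ dist (z k) (c (φ k)) + dist (c (φ k)) p := dist_triangle _ _ _
          _ ≤ Metric.diam (U (φ k)) + dist (c (φ k)) p := by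
              have : dist (z k) (c (φ k)) ≤ Metric.diam (U (φ k)) :=
                Metric.dist_le_diam_of_mem
                  ((Metric.isBounded_closedBall).subset (hsub _ (hU (φ k)))) (hz k) (hc (φ k))
              linarith
      have hrhs : Filter.Tendsto (fun k => Metric.diam (U (φ k)) + dist (c (φ k)) p)
          Filter.atTop (nhds 0) := by
        have h1 := hdiam0.comp hφ.tendsto_atTop
        have h2' := tendsto_iff_dist_tendsto_zero.mp hcp
        simpa using h1.add h2'
      exact squeeze_zero (fun k => dist_nonneg) hb hrhs
    ext w
    simp only [seqSetLimit, Set.mem_setOf_eq, Set.mem_singleton_iff]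
    constructor
    · rintro ⟨z, hz, hzw⟩
      exact tendsto_nhds_unique hzw (key z hz)
    · rintro rfl
      exact ⟨fun k => c (φ k), fun k => hc _, key _ (fun k => hc _)⟩
end

section
/- Let G be a torsion-free group acting on a compact metric space K as a convergence group, where K contains an invariant subset S on which the action is by homeomorphisms and the fixed points of the convergence dynamics lie in S. Then for every g ∈ G ∖ {1}, the homeomorphism of K induced by g has no fixed points in K ∖ S. In particular, for a convergence G-complex (μ, K, 𝒰) with G torsion-free, the action μ is free on K ∩ int(D^n). -/
open Filter
open Pointwise

/-- Let a torsion-free group `G` act by homeomorphisms on a compact metric space `K`,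
with an invariant subset `S`, such that the action has the convergence property with
attracting/repelling points always lying in `S`.  Then for every `g ≠ 1`, the
homeomorphism of `K` induced by `g` has no fixed point in `K ∖ S`.
(Applied to a convergence `G`-complex, `K` is the support of the complex, `S = K ∩ S^{n-1}`
and `K ∖ S = K ∩ int Dⁿ`, so the action is free on `K ∩ int Dⁿ`.) -/
theorem stmt4 {G K : Type*} [Group G] [MetricSpace K] [CompactSpace K]
    [MulAction G K] [ContinuousConstSMul G K]
    (htf : ∀ g : G, g ≠ 1 → ¬IsOfFinOrder g)
    (S : Set K) (hSinv : ∀ g : G, g • S = S)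
    (hconv : ∀ g : ℕ → G, Function.Injective g →
      ∃ φ : ℕ → ℕ, StrictMono φ ∧ ∃ a ∈ S, ∃ b ∈ S,
        ∀ C : Set K, IsCompact C → b ∉ C →
          TendstoUniformlyOn (fun k x => g (φ k) • x) (fun _ => a) atTop C) :
    ∀ g : G, g ≠ 1 → ∀ x : K, x ∉ S → g • x ≠ x := by
  intro g hg x hxS hfix
  have hinj : Function.Injective (fun n : ℕ => g ^ n) :=
    injective_pow_iff_not_isOfFinOrder.mpr (htf g hg)
  obtain ⟨φ, hφ, a, haS, b, hbS, hU⟩ := hconv (fun n => g ^ n) hinj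
  have hbx : b ∉ ({x} : Set K) := by
    simp only [Set.mem_singleton_iff]
    rintro rfl; exact hxS hbS
  have hUx := hU {x} isCompact_singleton hbx
  have hpow : ∀ n : ℕ, g ^ n • x = x := by
    intro n
    induction n with
    | zero => simp
    | succ n ih => rw [pow_succ, mul_smul, hfix, ih]
  have hax : a = x := by
    by_contra hne
    have hd : 0 < dist a x := dist_pos.mpr hne
    rw [Metric.tendstoUniformlyOn_iff] at hUx
    obtain ⟨N, hN⟩ := (hUx (dist a x) hd).exists
    have := hN x rfl
    rw [hpow] at this
    exact lt_irrefl _ this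
  exact hxS (hax ▸ haS)
end

section
/- Let (μ, K, 𝒰) be a G-complex that is a refinement of a G-complex (μ', K', 𝒰'), and suppose U ⊆ U' where U ∈ 𝒰 and U' ∈ 𝒰'. Then Stab_μ(U) ≤ Stab_{μ'}(U'). -/
/-- A generalized cell decomposition of the closed unit ball `Dⁿ`: a closed subset `K`
containing the boundary sphere, whose complementary components (the "cells") are open
cells with spherical boundaries, such that every sequence of distinct cells has a
subsequence converging to a single point. -/
structure GenCellDecomp (n : ℕ) where
  K : Set (EuclideanSpace ℝ (Fin n))
  isClosed : IsClosed K
  subset_ball : K ⊆ Metric.closedBall 0 1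
  sphere_subset : Metric.sphere (0 : EuclideanSpace ℝ (Fin n)) 1 ⊆ K
  cells : Set (Set (EuclideanSpace ℝ (Fin n)))
  cells_eq : cells = {C | ∃ x ∈ Metric.closedBall (0 : EuclideanSpace ℝ (Fin n)) 1 \ K,
    C = connectedComponentIn (Metric.closedBall (0 : EuclideanSpace ℝ (Fin n)) 1 \ K) x}
  cell_int : ∀ U ∈ cells, Nonempty (↥U ≃ₜ ↥(Metric.ball (0 : EuclideanSpace ℝ (Fin n)) 1))
  cell_bdry : ∀ U ∈ cells,
    Nonempty (↥(closure U \ U) ≃ₜ ↥(Metric.sphere (0 : EuclideanSpace ℝ (Fin n)) 1))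
  subconv : ∀ U : ℕ → Set (EuclideanSpace ℝ (Fin n)), (∀ m, U m ∈ cells) →
    Function.Injective U → ∃ φ : ℕ → ℕ, StrictMono φ ∧ ∃ p,
      {q | ∃ x : ℕ → EuclideanSpace ℝ (Fin n), (∀ k, x k ∈ U (φ k)) ∧
        Filter.Tendsto x Filter.atTop (nhds q)} = {p}

/-- The image of a subset `S ⊆ α` under a self-map of the subtype `↥A`. -/
def subIm {α : Type*} {A : Set α} (e : ↥A → ↥A) (S : Set α) : Set α :=
  Subtype.val '' (e '' (Subtype.val ⁻¹' S))

/-- A `G`-complex: a generalized cell decomposition together with a faithful action of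
`G` by homeomorphisms of `K` preserving the boundary sphere and permuting the boundaries
of the cells. -/
structure GComplex (n : ℕ) (G : Type*) [Group G] extends GenCellDecomp n where
  act : G → ↥K → ↥K
  act_one : ∀ x, act 1 x = x
  act_mul : ∀ g h x, act (g * h) x = act g (act h x)
  act_cont : ∀ g, Continuous (act g)
  act_faithful : ∀ g, (∀ x, act g x = x) → g = 1
  sphere_inv : ∀ g, subIm (act g) (Metric.sphere (0 : EuclideanSpace ℝ (Fin n)) 1) =
    Metric.sphere (0 : EuclideanSpace ℝ (Fin n)) 1
  cells_perm : ∀ g, ∀ U ∈ cells, ∃ U' ∈ cells,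
    subIm (act g) (closure U \ U) = closure U' \ U'

/-- A `G`-complex is free if no nontrivial element fixes a point of `K ∩ int Dⁿ`. -/
def GComplex.IsFree {n : ℕ} {G : Type*} [Group G] (c : GComplex n G) : Prop :=
  ∀ g : G, g ≠ 1 → ∀ x : ↥c.K,
    (x : EuclideanSpace ℝ (Fin n)) ∈ Metric.ball (0 : EuclideanSpace ℝ (Fin n)) 1 →
      c.act g x ≠ x

/-- A `G`-complex is a convergence complex if the action on `K` is a convergence action. -/
def GComplex.IsConvergence {n : ℕ} {G : Type*} [Group G] (c : GComplex n G) : Prop :=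
  ∀ g : ℕ → G, Function.Injective g → ∃ φ : ℕ → ℕ, StrictMono φ ∧ ∃ a b : ↥c.K,
    ∀ C : Set ↥c.K, IsCompact C → b ∉ C →
      TendstoUniformlyOn (fun k x => c.act (g (φ k)) x) (fun _ => a) Filter.atTop C

/-- The stabilizer of a cell `U`: elements whose action preserves `∂U = cl U ∖ U`. -/
def GComplex.stab {n : ℕ} {G : Type*} [Group G] (c : GComplex n G)
    (U : Set (EuclideanSpace ℝ (Fin n))) : Set G :=
  {g : G | subIm (c.act g) (closure U \ U) = closure U \ U}

namespace Stmt13Aux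

open Filter Metric Set

variable {n : ℕ}

/-- Either some value recurs frequently, or we can extract an injective subsequence. -/
lemma freq_or_inj {α : Type*} (W : ℕ → α) :
    (∃ a, ∃ᶠ n in atTop, W n = a) ∨ ∃ θ : ℕ → ℕ, StrictMono θ ∧ Function.Injective (W ∘ θ) := by
  by_cases h : ∃ a, ∃ᶠ n in atTop, W n = a
  · exact Or.inl h
  right
  push_neg at h
  have he : ∀ a : α, ∀ᶠ n in atTop, W n ≠ a := by
    intro a
    have := h a
    exact this
  have key : ∀ s : Finset ℕ, ∀ m : ℕ, ∃ k, m < k ∧ ∀ j ∈ s, W k ≠ W j := by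
    intro s m
    have h1 : ∀ᶠ n in atTop, ∀ j ∈ s, W n ≠ W j :=
      (Filter.eventually_all_finset s).mpr fun j _ => he (W j)
    have h2 : ∀ᶠ n in atTop, m < n ∧ ∀ j ∈ s, W n ≠ W j :=
      (Filter.eventually_gt_atTop m).and h1
    exact h2.exists
  choose next hnext1 hnext2 using key
  classical
  let Fa : ℕ → ℕ × Finset ℕ := fun k =>
    Nat.rec ((0 : ℕ), ({0} : Finset ℕ))
      (fun _ p => (next p.2 p.1, insert (next p.2 p.1) p.2)) k
  set θ : ℕ → ℕ := fun k => (Fa k).1 with hθ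
  have hθS : ∀ k, θ (k + 1) = next (Fa k).2 (Fa k).1 := fun k => rfl
  have hFaS2 : ∀ k, (Fa (k + 1)).2 = insert (next (Fa k).2 (Fa k).1) (Fa k).2 := fun k => rfl
  have hmono : StrictMono θ := by
    apply strictMono_nat_of_lt_succ
    intro k
    rw [hθS k]
    exact hnext1 (Fa k).2 (θ k)
  have hmem : ∀ k j, j ≤ k → θ j ∈ (Fa k).2 := by
    intro k
    induction k with
    | zero =>
      intro j hj
      have : j = 0 := Nat.le_zero.mp hj
      subst this
      exact Finset.mem_singleton_self 0
    | succ k ih =>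
      intro j hj
      rcases Nat.lt_succ_iff_lt_or_eq.mp (Nat.lt_succ_of_le hj) with h' | h'
      · rw [hFaS2]
        exact Finset.mem_insert_of_mem (ih j (Nat.lt_succ_iff.mp h'))
      · subst h'
        rw [hθS, hFaS2]
        exact Finset.mem_insert_self _ _
  have hne : ∀ j k, j < k → W (θ k) ≠ W (θ j) := by
    intro j k hjk
    cases k with
    | zero => omega
    | succ m =>
      rw [hθS m]
      exact hnext2 (Fa m).2 (Fa m).1 (θ j) (hmem m j (Nat.lt_succ_iff.mp hjk))
  refine ⟨θ, hmono, ?_⟩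
  intro a b hab
  by_contra hne'
  rcases lt_or_gt_of_ne hne' with h | h
  · exact hne a b h hab.symm
  · exact hne b a h hab


/-- The open complement of `K` in the disk. -/
def dom (d : GenCellDecomp n) : Set (EuclideanSpace ℝ (Fin n)) :=
  Metric.closedBall 0 1 \ d.K

lemma dom_eq (d : GenCellDecomp n) : dom d = Metric.ball 0 1 \ d.K := by
  ext x
  constructor
  · rintro ⟨hx1, hx2⟩
    refine ⟨?_, hx2⟩
    rcases lt_or_eq_of_le (mem_closedBall.mp hx1) with h | h
    · exact mem_ball.mpr h
    · exact absurd (d.sphere_subset (mem_sphere.mpr h)) hx2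
  · rintro ⟨hx1, hx2⟩
    exact ⟨ball_subset_closedBall hx1, hx2⟩

lemma dom_open (d : GenCellDecomp n) : IsOpen (dom d) := by
  rw [dom_eq]
  exact isOpen_ball.sdiff d.isClosed

lemma dom_subset (d : GenCellDecomp n) : dom d ⊆ Metric.closedBall 0 1 := diff_subset

lemma comp_mem_cells (d : GenCellDecomp n) {x : EuclideanSpace ℝ (Fin n)} (hx : x ∈ dom d) :
    connectedComponentIn (dom d) x ∈ d.cells := by
  rw [d.cells_eq]
  exact ⟨x, hx, rfl⟩

lemma cell_eq_comp {d : GenCellDecomp n} {W : Set (EuclideanSpace ℝ (Fin n))}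
    (hW : W ∈ d.cells) {x : EuclideanSpace ℝ (Fin n)} (hx : x ∈ W) :
    W = connectedComponentIn (dom d) x := by
  rw [d.cells_eq] at hW
  obtain ⟨x₀, hx₀, rfl⟩ := hW
  exact connectedComponentIn_eq hx

lemma cell_subset_dom {d : GenCellDecomp n} {W : Set (EuclideanSpace ℝ (Fin n))}
    (hW : W ∈ d.cells) : W ⊆ dom d := by
  rw [d.cells_eq] at hW
  obtain ⟨x₀, hx₀, rfl⟩ := hW
  exact connectedComponentIn_subset _ _

lemma cell_nonempty {d : GenCellDecomp n} {W : Set (EuclideanSpace ℝ (Fin n))}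
    (hW : W ∈ d.cells) : W.Nonempty := by
  rw [d.cells_eq] at hW
  obtain ⟨x₀, hx₀, rfl⟩ := hW
  exact ⟨x₀, mem_connectedComponentIn hx₀⟩

lemma cell_open {d : GenCellDecomp n} {W : Set (EuclideanSpace ℝ (Fin n))}
    (hW : W ∈ d.cells) : IsOpen W := by
  rw [d.cells_eq] at hW
  obtain ⟨x₀, hx₀, rfl⟩ := hW
  exact (dom_open d).connectedComponentIn

lemma cell_preconnected {d : GenCellDecomp n} {W : Set (EuclideanSpace ℝ (Fin n))}
    (hW : W ∈ d.cells) : IsPreconnected W := by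
  rw [d.cells_eq] at hW
  obtain ⟨x₀, hx₀, rfl⟩ := hW
  exact isPreconnected_connectedComponentIn

lemma cell_closure_subset {d : GenCellDecomp n} {W : Set (EuclideanSpace ℝ (Fin n))}
    (hW : W ∈ d.cells) : closure W ⊆ Metric.closedBall 0 1 :=
  closure_minimal ((cell_subset_dom hW).trans (dom_subset d)) isClosed_closedBall

lemma cell_closure_diff {d : GenCellDecomp n} {W : Set (EuclideanSpace ℝ (Fin n))}
    (hW : W ∈ d.cells) : closure W \ W ⊆ d.K := by
  rintro x ⟨hx1, hx2⟩
  by_contra hxK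
  have hxdom : x ∈ dom d := ⟨cell_closure_subset hW hx1, hxK⟩
  have hopen : IsOpen (connectedComponentIn (dom d) x) := (dom_open d).connectedComponentIn
  have hxmem : x ∈ connectedComponentIn (dom d) x := mem_connectedComponentIn hxdom
  obtain ⟨y, hyc, hyW⟩ := mem_closure_iff.mp hx1 _ hopen hxmem
  have h1 : W = connectedComponentIn (dom d) y := cell_eq_comp hW hyW
  have h2 : connectedComponentIn (dom d) x = connectedComponentIn (dom d) y :=
    connectedComponentIn_eq hyc
  rw [← h2] at h1
  rw [h1] at hx2
  exact hx2 hxmem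

lemma cell_mem_of_closure_notK {d : GenCellDecomp n} {W : Set (EuclideanSpace ℝ (Fin n))}
    (hW : W ∈ d.cells) {x : EuclideanSpace ℝ (Fin n)} (hx : x ∈ closure W) (hxK : x ∉ d.K) :
    x ∈ W := by
  by_contra hxW
  exact hxK (cell_closure_diff hW ⟨hx, hxW⟩)

lemma cell_disjoint_K {d : GenCellDecomp n} {W : Set (EuclideanSpace ℝ (Fin n))}
    (hW : W ∈ d.cells) {x : EuclideanSpace ℝ (Fin n)} (hx : x ∈ W) : x ∉ d.K :=
  (cell_subset_dom hW hx).2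

/-- The null-family property: points taken in the closures of an injective sequence of
cells can converge to at most one point. -/
lemma null_lemma (d : GenCellDecomp n) (W : ℕ → Set (EuclideanSpace ℝ (Fin n)))
    (hW : ∀ k, W k ∈ d.cells) (hinj : Function.Injective W)
    {av bv : ℕ → EuclideanSpace ℝ (Fin n)} {a b : EuclideanSpace ℝ (Fin n)}
    (hav : ∀ k, av k ∈ closure (W k)) (hbv : ∀ k, bv k ∈ closure (W k))
    (ha : Tendsto av atTop (nhds a)) (hb : Tendsto bv atTop (nhds b)) : a = b := by
  obtain ⟨φ, hφ, p, hp⟩ := d.subconv W hW hinj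
  have claim : ∀ (cv : ℕ → EuclideanSpace ℝ (Fin n)) (l : EuclideanSpace ℝ (Fin n)),
      (∀ k, cv k ∈ closure (W k)) → Tendsto cv atTop (nhds l) → l = p := by
    intro cv l hcv hl
    have hsel : ∀ k : ℕ, ∃ y ∈ W (φ k), dist (cv (φ k)) y < 1 / (k + 1 : ℝ) := by
      intro k
      exact Metric.mem_closure_iff.mp (hcv (φ k)) _ (by positivity)
    choose y hy1 hy2 using hsel
    have hcvφ : Tendsto (fun k => cv (φ k)) atTop (nhds l) := hl.comp hφ.tendsto_atTop
    have hyl : Tendsto y atTop (nhds l) := by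
      rw [tendsto_iff_dist_tendsto_zero]
      have hbound : ∀ k : ℕ, dist (y k) l ≤ 1 / (k + 1 : ℝ) + dist (cv (φ k)) l := by
        intro k
        calc dist (y k) l ≤ dist (y k) (cv (φ k)) + dist (cv (φ k)) l := dist_triangle _ _ _
          _ ≤ 1 / (k + 1 : ℝ) + dist (cv (φ k)) l := by
              have := hy2 k
              rw [dist_comm]
              linarith
      have hg0 : Tendsto (fun k : ℕ => 1 / (k + 1 : ℝ) + dist (cv (φ k)) l) atTop (nhds 0) := by
        have h1 : Tendsto (fun k : ℕ => 1 / (k + 1 : ℝ)) atTop (nhds 0) :=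
          tendsto_one_div_add_atTop_nhds_zero_nat
        have h2 : Tendsto (fun k => dist (cv (φ k)) l) atTop (nhds 0) :=
          tendsto_iff_dist_tendsto_zero.mp hcvφ
        simpa using h1.add h2
      exact squeeze_zero (fun k => dist_nonneg) hbound hg0
    have : l ∈ {q | ∃ x : ℕ → EuclideanSpace ℝ (Fin n), (∀ k, x k ∈ W (φ k)) ∧
        Tendsto x atTop (nhds q)} := ⟨y, hy1, hyl⟩
    rw [hp] at this
    exact this
  rw [claim av a hav ha, claim bv b hbv hb]

variable {G : Type*} [Group G]

open Classical in
/-- The action of `g` as a global map on the ambient space (identity off `K`). -/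
noncomputable def Fm (c : GComplex n G) (g : G) :
    EuclideanSpace ℝ (Fin n) → EuclideanSpace ℝ (Fin n) :=
  fun x => if h : x ∈ c.K then ((c.act g ⟨x, h⟩ : ↥c.K) : EuclideanSpace ℝ (Fin n)) else x

lemma Fm_def (c : GComplex n G) (g : G) {x : EuclideanSpace ℝ (Fin n)} (h : x ∈ c.K) :
    Fm c g x = ((c.act g ⟨x, h⟩ : ↥c.K) : EuclideanSpace ℝ (Fin n)) := by
  unfold Fm
  rw [dif_pos h]

lemma Fm_mem (c : GComplex n G) (g : G) {x : EuclideanSpace ℝ (Fin n)} (h : x ∈ c.K) :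
    Fm c g x ∈ c.K := by
  rw [Fm_def c g h]
  exact (c.act g ⟨x, h⟩).2

lemma Fm_comp (c : GComplex n G) (g g' : G) {x : EuclideanSpace ℝ (Fin n)} (h : x ∈ c.K) :
    Fm c g' (Fm c g x) = Fm c (g' * g) x := by
  rw [Fm_def c g h, Fm_def c g' (c.act g ⟨x, h⟩).2, Fm_def c (g' * g) h, c.act_mul]

lemma Fm_inv (c : GComplex n G) (g : G) {x : EuclideanSpace ℝ (Fin n)} (h : x ∈ c.K) :
    Fm c g⁻¹ (Fm c g x) = x := by
  rw [Fm_comp c g g⁻¹ h, inv_mul_cancel]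
  rw [Fm_def c 1 h, c.act_one]

lemma Fm_continuousOn (c : GComplex n G) (g : G) : ContinuousOn (Fm c g) c.K := by
  rw [continuousOn_iff_continuous_restrict]
  have : c.K.restrict (Fm c g) =
      fun y : ↥c.K => ((c.act g y : ↥c.K) : EuclideanSpace ℝ (Fin n)) := by
    funext y
    have : Fm c g (y : EuclideanSpace ℝ (Fin n)) =
        ((c.act g ⟨(y : EuclideanSpace ℝ (Fin n)), y.2⟩ : ↥c.K) : EuclideanSpace ℝ (Fin n)) :=
      Fm_def c g y.2
    simpa [Set.restrict] using this
  rw [show c.K.domRestrict (Fm c g) = c.K.restrict (Fm c g) from rfl, this]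
  exact continuous_subtype_val.comp (c.act_cont g)

lemma Fm_tendsto (c : GComplex n G) (g : G) {y : ℕ → EuclideanSpace ℝ (Fin n)}
    {x : EuclideanSpace ℝ (Fin n)} (hy : ∀ k, y k ∈ c.K) (hx : x ∈ c.K)
    (h : Tendsto y atTop (nhds x)) :
    Tendsto (fun k => Fm c g (y k)) atTop (nhds (Fm c g x)) := by
  have h1 : Tendsto y atTop (nhdsWithin x c.K) :=
    tendsto_nhdsWithin_iff.mpr ⟨h, Filter.Eventually.of_forall hy⟩
  exact Filter.Tendsto.comp ((Fm_continuousOn c g) x hx) h1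

lemma subIm_eq_image (c : GComplex n G) (g : G) {S : Set (EuclideanSpace ℝ (Fin n))}
    (hS : S ⊆ c.K) : subIm (c.act g) S = Fm c g '' S := by
  ext y
  constructor
  · rintro ⟨z, ⟨w, hw, rfl⟩, rfl⟩
    refine ⟨(w : EuclideanSpace ℝ (Fin n)), hw, ?_⟩
    rw [Fm_def c g w.2, Subtype.coe_eta]
  · rintro ⟨x, hx, rfl⟩
    exact ⟨c.act g ⟨x, hS hx⟩, ⟨⟨x, hS hx⟩, hx, rfl⟩, (Fm_def c g (hS hx)).symm⟩

end Stmt13Aux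

namespace Stmt13Aux

open Filter Metric Set

variable {n : ℕ} {G : Type*} [Group G]

lemma Fm_agree (c c' : GComplex n G) (hK : c'.K ⊆ c.K)
    (hagree : ∀ g : G, ∀ p : EuclideanSpace ℝ (Fin n), ∀ (hp : p ∈ c'.K) (hp2 : p ∈ c.K),
      ((c.act g ⟨p, hp2⟩ : ↥c.K) : EuclideanSpace ℝ (Fin n)) =
        ((c'.act g ⟨p, hp⟩ : ↥c'.K) : EuclideanSpace ℝ (Fin n)))
    (g : G) {x : EuclideanSpace ℝ (Fin n)} (hx : x ∈ c'.K) : Fm c g x = Fm c' g x := by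
  rw [Fm_def c g (hK hx), Fm_def c' g hx]
  exact hagree g x hx (hK hx)

lemma Fm_memK' (c c' : GComplex n G) (hK : c'.K ⊆ c.K)
    (hagree : ∀ g : G, ∀ p : EuclideanSpace ℝ (Fin n), ∀ (hp : p ∈ c'.K) (hp2 : p ∈ c.K),
      ((c.act g ⟨p, hp2⟩ : ↥c.K) : EuclideanSpace ℝ (Fin n)) =
        ((c'.act g ⟨p, hp⟩ : ↥c'.K) : EuclideanSpace ℝ (Fin n)))
    (g : G) {x : EuclideanSpace ℝ (Fin n)} (hx : x ∈ c'.K) : Fm c g x ∈ c'.K := by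
  rw [Fm_agree c c' hK hagree g hx]
  exact Fm_mem c' g hx

lemma Fm_notmemK' (c c' : GComplex n G) (hK : c'.K ⊆ c.K)
    (hagree : ∀ g : G, ∀ p : EuclideanSpace ℝ (Fin n), ∀ (hp : p ∈ c'.K) (hp2 : p ∈ c.K),
      ((c.act g ⟨p, hp2⟩ : ↥c.K) : EuclideanSpace ℝ (Fin n)) =
        ((c'.act g ⟨p, hp⟩ : ↥c'.K) : EuclideanSpace ℝ (Fin n)))
    (g : G) {x : EuclideanSpace ℝ (Fin n)} (hx : x ∈ c.K) (hx' : x ∉ c'.K) :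
    Fm c g x ∉ c'.K := by
  intro hcon
  apply hx'
  have h1 : Fm c g⁻¹ (Fm c g x) ∈ c'.K := Fm_memK' c c' hK hagree g⁻¹ hcon
  rwa [Fm_inv c g hx] at h1

/-- The key step: if `g` stabilizes `∂U` then the action of `g` maps `closure U' ∩ K`
into `closure U'`. -/
lemma key (c c' : GComplex n G) (hK : c'.K ⊆ c.K)
    (hagree : ∀ g : G, ∀ p : EuclideanSpace ℝ (Fin n), ∀ (hp : p ∈ c'.K) (hp2 : p ∈ c.K),
      ((c.act g ⟨p, hp2⟩ : ↥c.K) : EuclideanSpace ℝ (Fin n)) =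
        ((c'.act g ⟨p, hp⟩ : ↥c'.K) : EuclideanSpace ℝ (Fin n)))
    (U U' : Set (EuclideanSpace ℝ (Fin n))) (hU : U ∈ c.cells) (hU' : U' ∈ c'.cells)
    (hsub : U ⊆ U') (g : G) (hFU : Fm c g '' (closure U \ U) = closure U \ U) :
    ∀ x, x ∈ closure U' → x ∈ c.K → Fm c g x ∈ closure U' := by
  classical
  set Ω : Set (EuclideanSpace ℝ (Fin n)) := dom c.toGenCellDecomp with hΩdef
  set Ω' : Set (EuclideanSpace ℝ (Fin n)) := dom c'.toGenCellDecomp with hΩ'def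
  have hΩsub : Ω ⊆ Ω' := fun x hx => ⟨hx.1, fun h => hx.2 (hK h)⟩
  have hU'open : IsOpen U' := cell_open hU'
  have hU'pre : IsPreconnected U' := cell_preconnected hU'
  have hU'dom : U' ⊆ Ω' := cell_subset_dom hU'
  have hU'K' : ∀ x, x ∈ U' → x ∉ c'.K := fun x hx => (hU'dom hx).2
  have hU'comp : ∀ x, x ∈ U' → connectedComponentIn Ω' x = U' :=
    fun x hx => (cell_eq_comp hU' hx).symm
  have hUne : U.Nonempty := cell_nonempty hU
  -- Action basics
  have hFmK : ∀ x, x ∈ c.K → Fm c g x ∈ c.K := fun x hx => Fm_mem c g hx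
  have hFmnotK' : ∀ x, x ∈ c.K → x ∉ c'.K → Fm c g x ∉ c'.K :=
    fun x hx hx' => Fm_notmemK' c c' hK hagree g hx hx'
  have hFmΩ' : ∀ x, x ∈ c.K → x ∉ c'.K → Fm c g x ∈ Ω' :=
    fun x hx hx' => ⟨c.subset_ball (hFmK x hx), hFmnotK' x hx hx'⟩
  -- The induced map on cells
  have perm : ∀ W, W ∈ c.cells →
      ∃ V, V ∈ c.cells ∧ Fm c g '' (closure W \ W) = closure V \ V := by
    intro W hW
    obtain ⟨V, hV, hFV⟩ := c.cells_perm g W hW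
    refine ⟨V, hV, ?_⟩
    rw [← subIm_eq_image c g (cell_closure_diff hW)]
    exact hFV
  have perm' : ∀ W : Set (EuclideanSpace ℝ (Fin n)), ∃ V,
      W ∈ c.cells → V ∈ c.cells ∧ Fm c g '' (closure W \ W) = closure V \ V := by
    intro W
    by_cases hW : W ∈ c.cells
    · obtain ⟨V, h1, h2⟩ := perm W hW
      exact ⟨V, fun _ => ⟨h1, h2⟩⟩
    · exact ⟨∅, fun h => absurd h hW⟩
  choose σ0 hσ0 using perm'
  obtain ⟨σ, hσ, hσU⟩ : ∃ σ : Set (EuclideanSpace ℝ (Fin n)) → Set (EuclideanSpace ℝ (Fin n)),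
      (∀ W, W ∈ c.cells →
        σ W ∈ c.cells ∧ Fm c g '' (closure W \ W) = closure (σ W) \ σ W) ∧ σ U = U := by
    refine ⟨fun W => if W = U then U else σ0 W, ?_, ?_⟩
    · intro W hW
      show (if W = U then U else σ0 W) ∈ c.cells ∧
        Fm c g '' (closure W \ W) =
          closure (if W = U then U else σ0 W) \ (if W = U then U else σ0 W)
      by_cases hWU : W = U
      · rw [if_pos hWU]
        subst hWU
        exact ⟨hU, hFU⟩
      · rw [if_neg hWU]
        exact hσ0 W hW
    · show (if U = U then U else σ0 U) = U
      exact if_pos rfl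
  -- The cell of `Ω'` containing a given set
  obtain ⟨T, hT⟩ : ∃ T : Set (EuclideanSpace ℝ (Fin n)) → Set (EuclideanSpace ℝ (Fin n)),
      ∀ S : Set (EuclideanSpace ℝ (Fin n)), S.Nonempty → S ⊆ Ω' → IsPreconnected S →
        (∀ y, y ∈ S → connectedComponentIn Ω' y = T S) ∧ S ⊆ T S := by
    refine ⟨fun S => if hS : S.Nonempty then connectedComponentIn Ω' hS.some else ∅, ?_⟩
    intro S hS hSΩ hSpre
    show (∀ y, y ∈ S → connectedComponentIn Ω' y =
        (if hS' : S.Nonempty then connectedComponentIn Ω' hS'.some else ∅)) ∧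
      S ⊆ (if hS' : S.Nonempty then connectedComponentIn Ω' hS'.some else ∅)
    rw [dif_pos hS]
    have h1 : S ⊆ connectedComponentIn Ω' hS.some :=
      hSpre.subset_connectedComponentIn hS.some_mem hSΩ
    exact ⟨fun y hy => (connectedComponentIn_eq (h1 hy)).symm, h1⟩
  -- cells of `c` inside `U'`
  have hcell : ∀ x, x ∈ U' → x ∉ c.K → connectedComponentIn Ω x ∈ c.cells ∧
      x ∈ connectedComponentIn Ω x ∧ connectedComponentIn Ω x ⊆ U' := by
    intro x hx hxK
    have hxΩ : x ∈ Ω := ⟨(hU'dom hx).1, hxK⟩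
    refine ⟨comp_mem_cells _ hxΩ, mem_connectedComponentIn hxΩ, ?_⟩
    have h1 : connectedComponentIn Ω x ⊆ connectedComponentIn Ω' x :=
      isPreconnected_connectedComponentIn.subset_connectedComponentIn
        (mem_connectedComponentIn hxΩ) ((connectedComponentIn_subset _ _).trans hΩsub)
    rw [hU'comp x hx] at h1
    exact h1
  have hTW : ∀ W, W ∈ c.cells → σ W ⊆ T (σ W) ∧
      (∀ y, y ∈ closure (σ W) → y ∉ c'.K → y ∈ T (σ W)) ∧
      (∀ y, y ∈ T (σ W) → connectedComponentIn Ω' y = T (σ W)) := by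
    intro W hW
    have hσW : σ W ∈ c.cells := (hσ W hW).1
    have h1 : σ W ⊆ Ω' := (cell_subset_dom hσW).trans hΩsub
    have hTs := hT (σ W) (cell_nonempty hσW) h1 (cell_preconnected hσW)
    obtain ⟨y₀, hy₀⟩ := cell_nonempty hσW
    have hTcell : T (σ W) ∈ c'.cells := by
      rw [← hTs.1 y₀ hy₀]
      exact comp_mem_cells _ (h1 hy₀)
    refine ⟨hTs.2, ?_, ?_⟩
    · intro y hy hyK'
      exact cell_mem_of_closure_notK hTcell (closure_mono hTs.2 hy) hyK'
    · intro y hy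
      exact (cell_eq_comp hTcell hy).symm
  have hedge : ∀ W, W ∈ c.cells → ∀ x, x ∈ closure W → x ∈ c.K → x ∉ c'.K →
      Fm c g x ∈ T (σ W) ∧ connectedComponentIn Ω' (Fm c g x) = T (σ W) := by
    intro W hW x hxcl hxK hxK'
    have hxW : x ∉ W := fun h => cell_disjoint_K hW h hxK
    have h1 : Fm c g x ∈ closure (σ W) \ σ W := by
      rw [← (hσ W hW).2]
      exact ⟨x, ⟨hxcl, hxW⟩, rfl⟩
    have h2 : Fm c g x ∉ c'.K := hFmnotK' x hxK hxK'
    have h3 : Fm c g x ∈ T (σ W) := (hTW W hW).2.1 _ h1.1 h2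
    exact ⟨h3, (hTW W hW).2.2 _ h3⟩
  -- the cell-tracking function
  set lam : EuclideanSpace ℝ (Fin n) → Set (EuclideanSpace ℝ (Fin n)) :=
    fun x => if x ∈ c.K then connectedComponentIn Ω' (Fm c g x)
      else T (σ (connectedComponentIn Ω x)) with hlamdef
  have hlamK : ∀ x, x ∈ c.K → lam x = connectedComponentIn Ω' (Fm c g x) :=
    fun x hx => if_pos hx
  have hlamcell : ∀ W, W ∈ c.cells → ∀ x, x ∈ W → lam x = T (σ W) := by
    intro W hW x hx
    have h1 : lam x = T (σ (connectedComponentIn Ω x)) := if_neg (cell_disjoint_K hW hx)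
    rw [h1, ← cell_eq_comp hW hx]
  have hlamU : ∀ x, x ∈ U → lam x = U' := by
    intro x hx
    rw [hlamcell U hU x hx, hσU]
    have hTU := hT U hUne ((cell_subset_dom hU).trans hΩsub) (cell_preconnected hU)
    rw [← hTU.1 x hx]
    exact hU'comp x (hsub hx)
  -- boundary points of cells inside U'
  have hbdry : ∀ W, W ∈ c.cells → W ⊆ U' → W ≠ U' →
      ∃ b, b ∈ closure W ∧ b ∈ U' ∧ b ∈ c.K := by
    intro W hW hWU' hWne
    have hWopen := cell_open hW
    have hWnem := cell_nonempty hW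
    have hex : ∃ b, (b ∈ closure W ∧ b ∈ U') ∧ b ∉ W := by
      by_contra hcon
      push_neg at hcon
      have hclW : ∀ b, b ∈ closure W → b ∈ U' → b ∈ W := fun b h1 h2 => hcon b ⟨h1, h2⟩
      have hne2 : (U' ∩ (closure W)ᶜ).Nonempty := by
        by_contra h2
        rw [not_nonempty_iff_eq_empty] at h2
        have hU'clW : U' ⊆ closure W := by
          intro u hu
          by_contra hucl
          rw [eq_empty_iff_forall_notMem] at h2
          exact h2 u ⟨hu, hucl⟩
        exact hWne (Subset.antisymm hWU' (fun u hu => hclW u (hU'clW hu) hu))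
      obtain ⟨w, hw1, hw2, hw3⟩ := hU'pre W (closure W)ᶜ hWopen isClosed_closure.isOpen_compl
        (fun u hu => by
          by_cases h : u ∈ closure W
          · exact Or.inl (hclW u h hu)
          · exact Or.inr h)
        ⟨hWnem.some, hWU' hWnem.some_mem, hWnem.some_mem⟩
        hne2
      exact hw3 (subset_closure hw2)
    obtain ⟨b, ⟨hb1, hb2⟩, hb3⟩ := hex
    exact ⟨b, hb1, hb2, cell_closure_diff hW ⟨hb1, hb3⟩⟩
  -- bridge construction
  have hbridge : ∀ (Wf : ℕ → Set (EuclideanSpace ℝ (Fin n))),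
      (∀ k, Wf k ∈ c.cells) → (∀ k, Wf k ⊆ U') → (∀ k, Wf k ≠ U') →
      Function.Injective Wf → ∀ (z : ℕ → EuclideanSpace ℝ (Fin n)), (∀ k, z k ∈ Wf k) →
      ∀ x, Tendsto z atTop (nhds x) →
      ∃ (θ : ℕ → ℕ) (y : ℕ → EuclideanSpace ℝ (Fin n)), StrictMono θ ∧
        (∀ k, y k ∈ closure (Wf (θ k)) ∧ y k ∈ U' ∧ y k ∈ c.K) ∧
        Tendsto y atTop (nhds x) := by
    intro Wf hWf1 hWf2 hWf3 hWfinj z hz x hzx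
    choose b hb1 hb2 hb3 using fun k => hbdry (Wf k) (hWf1 k) (hWf2 k) (hWf3 k)
    have hbball : ∀ k, b k ∈ Metric.closedBall (0 : EuclideanSpace ℝ (Fin n)) 1 :=
      fun k => (hU'dom (hb2 k)).1
    obtain ⟨bs, hbsmem, θ, hθ, hbθ⟩ :=
      (isCompact_closedBall (0 : EuclideanSpace ℝ (Fin n)) 1).tendsto_subseq hbball
    have hx' : Tendsto (fun k => z (θ k)) atTop (nhds x) := hzx.comp hθ.tendsto_atTop
    have hxb : x = bs := by
      refine null_lemma c.toGenCellDecomp (fun k => Wf (θ k)) (fun k => hWf1 _)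
        (hWfinj.comp hθ.injective) (av := fun k => z (θ k)) (bv := fun k => b (θ k))
        (fun k => subset_closure (hz _)) (fun k => hb1 _) hx' ?_
      exact hbθ
    refine ⟨θ, fun k => b (θ k), hθ, fun k => ⟨hb1 _, hb2 _, hb3 _⟩, ?_⟩
    rw [hxb]
    exact hbθ
  -- the workhorse case analysis
  have hwork : ∀ x, x ∈ closure U' → x ∈ c.K →
      ∀ z : ℕ → EuclideanSpace ℝ (Fin n), (∀ k, z k ∈ U') → Tendsto z atTop (nhds x) →
      (∃ θ : ℕ → ℕ, StrictMono θ ∧ (∀ k, z (θ k) ∈ c.K) ∧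
        Tendsto (fun k => Fm c g (z (θ k))) atTop (nhds (Fm c g x)))
      ∨ (∃ W, W ∈ c.cells ∧ W ⊆ U' ∧ x ∈ closure W ∧ ∃ k, z k ∈ W)
      ∨ (∃ (κ : ℕ → ℕ) (y : ℕ → EuclideanSpace ℝ (Fin n)), (∀ k, z (κ k) ∈ U' ∧ z (κ k) ∉ c.K) ∧
          (∀ k, y k ∈ closure (connectedComponentIn Ω (z (κ k))) ∧ y k ∈ U' ∧ y k ∈ c.K) ∧
          Tendsto (fun k => Fm c g (y k)) atTop (nhds (Fm c g x))) := by
    intro x hxcl hxK z hz hzx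
    by_cases hfreq : ∃ᶠ k in atTop, z k ∈ c.K
    · left
      obtain ⟨θ, hθ, hθK⟩ := Filter.extraction_of_frequently_atTop hfreq
      exact ⟨θ, hθ, hθK, Fm_tendsto c g hθK hxK (hzx.comp hθ.tendsto_atTop)⟩
    · have hev : ∀ᶠ k in atTop, z k ∉ c.K := by rwa [Filter.not_frequently] at hfreq
      obtain ⟨N₀, hN₀⟩ := Filter.eventually_atTop.mp hev
      set z' : ℕ → EuclideanSpace ℝ (Fin n) := fun k => z (k + N₀) with hz'def
      have hz' : ∀ k, z' k ∈ U' := fun k => hz _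
      have hz'K : ∀ k, z' k ∉ c.K := fun k => hN₀ _ (Nat.le_add_left _ _)
      have hz'x : Tendsto z' atTop (nhds x) := hzx.comp (tendsto_add_atTop_nat N₀)
      set Wf : ℕ → Set (EuclideanSpace ℝ (Fin n)) :=
        fun k => connectedComponentIn Ω (z' k) with hWfdef
      have hWf : ∀ k, Wf k ∈ c.cells ∧ z' k ∈ Wf k ∧ Wf k ⊆ U' :=
        fun k => hcell (z' k) (hz' k) (hz'K k)
      by_cases hxW : ∃ k, x ∈ closure (Wf k)
      · right; left
        obtain ⟨k, hk⟩ := hxW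
        exact ⟨Wf k, (hWf k).1, (hWf k).2.2, hk, ⟨k + N₀, (hWf k).2.1⟩⟩
      · push_neg at hxW
        rcases freq_or_inj Wf with ⟨V, hV⟩ | ⟨θ, hθ, hinj⟩
        · exfalso
          obtain ⟨θ, hθ, hθV⟩ := Filter.extraction_of_frequently_atTop hV
          have hmemV : ∀ k, z' (θ k) ∈ V := fun k => (hθV k) ▸ (hWf (θ k)).2.1
          have hlim : Tendsto (fun k => z' (θ k)) atTop (nhds x) := hz'x.comp hθ.tendsto_atTop
          have hxV : x ∈ closure V :=
            mem_closure_of_tendsto hlim (Filter.Eventually.of_forall hmemV)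
          exact hxW (θ 0) (by rw [hθV 0]; exact hxV)
        · right; right
          have hWfne : ∀ k, Wf (θ k) ≠ U' := by
            intro k hcon
            exact hxW (θ k) (by rw [hcon]; exact hxcl)
          obtain ⟨θ₂, y, hθ₂, hy, hyx⟩ := hbridge (fun k => Wf (θ k)) (fun k => (hWf _).1)
            (fun k => (hWf _).2.2) hWfne hinj (fun k => z' (θ k)) (fun k => (hWf _).2.1)
            x (hz'x.comp hθ.tendsto_atTop)
          refine ⟨fun k => θ (θ₂ k) + N₀, y, ?_, ?_, ?_⟩
          · intro k
            exact ⟨hz' _, hz'K _⟩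
          · intro k
            exact hy k
          · exact Fm_tendsto c g (fun k => (hy k).2.2) hxK hyx
  -- main convergence lemma
  have hmain : ∀ x, x ∈ closure U' → x ∈ c.K →
      ∀ z : ℕ → EuclideanSpace ℝ (Fin n), (∀ k, z k ∈ U') → Tendsto z atTop (nhds x) →
      (∀ k, lam (z k) = U') → Fm c g x ∈ closure U' := by
    intro x hxcl hxK z hz hzx hlamz
    rcases hwork x hxcl hxK z hz hzx with ⟨θ, hθ, hθK, hFz⟩ |
      ⟨W, hW, hWU', hxclW, k, hzkW⟩ | ⟨κ, y, hκ, hy, hFy⟩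
    · apply mem_closure_of_tendsto hFz
      apply Filter.Eventually.of_forall
      intro k
      have h1 : Fm c g (z (θ k)) ∈ connectedComponentIn Ω' (Fm c g (z (θ k))) :=
        mem_connectedComponentIn (hFmΩ' _ (hθK k) (hU'K' _ (hz _)))
      rw [← hlamK _ (hθK k), hlamz (θ k)] at h1
      exact h1
    · have hTeq : T (σ W) = U' := by
        rw [← hlamcell W hW _ hzkW]
        exact hlamz k
      have hxW : x ∉ W := fun h => cell_disjoint_K hW h hxK
      have h1 : Fm c g x ∈ closure (σ W) \ σ W := by
        rw [← (hσ W hW).2]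
        exact ⟨x, ⟨hxclW, hxW⟩, rfl⟩
      have h2 : closure (σ W) ⊆ closure (T (σ W)) := closure_mono (hTW W hW).1
      rw [hTeq] at h2
      exact h2 h1.1
    · apply mem_closure_of_tendsto hFy
      apply Filter.Eventually.of_forall
      intro k
      have hWk := hcell _ (hκ k).1 (hκ k).2
      have hek := hedge _ hWk.1 (y k) (hy k).1 (hy k).2.2 (hU'K' _ (hy k).2.1)
      have hTeq : T (σ (connectedComponentIn Ω (z (κ k)))) = U' := by
        rw [← hlamcell _ hWk.1 _ hWk.2.1]
        exact hlamz (κ k)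
      rw [hTeq] at hek
      exact hek.1
  -- local propagation of lam = U'
  have hmain2 : ∀ x, x ∈ U' → lam x = U' →
      ∀ z : ℕ → EuclideanSpace ℝ (Fin n), (∀ k, z k ∈ U') → Tendsto z atTop (nhds x) →
      ∃ k, lam (z k) = U' := by
    intro x hxU' hlx z hz hzx
    by_cases hxK : x ∈ c.K
    · have hFxU' : Fm c g x ∈ U' := by
        have h1 : Fm c g x ∈ connectedComponentIn Ω' (Fm c g x) :=
          mem_connectedComponentIn (hFmΩ' _ hxK (hU'K' _ hxU'))
        rw [← hlamK _ hxK, hlx] at h1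
        exact h1
      rcases hwork x (subset_closure hxU') hxK z hz hzx with ⟨θ, hθ, hθK, hFz⟩ |
        ⟨W, hW, hWU', hxclW, k, hzkW⟩ | ⟨κ, y, hκ, hy, hFy⟩
      · obtain ⟨k, hk⟩ := (hFz.eventually (hU'open.mem_nhds hFxU')).exists
        refine ⟨θ k, ?_⟩
        rw [hlamK _ (hθK k)]
        exact hU'comp _ hk
      · have hek := hedge W hW x hxclW hxK (hU'K' _ hxU')
        have hTeq : T (σ W) = U' := by
          rw [← hek.2]
          exact hU'comp _ hFxU'
        exact ⟨k, by rw [hlamcell W hW _ hzkW, hTeq]⟩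
      · obtain ⟨k, hk⟩ := (hFy.eventually (hU'open.mem_nhds hFxU')).exists
        have hWk := hcell _ (hκ k).1 (hκ k).2
        have hek := hedge _ hWk.1 (y k) (hy k).1 (hy k).2.2 (hU'K' _ (hy k).2.1)
        have hTeq : T (σ (connectedComponentIn Ω (z (κ k)))) = U' := by
          rw [← hek.2]
          exact hU'comp _ hk
        exact ⟨κ k, by rw [hlamcell _ hWk.1 _ hWk.2.1, hTeq]⟩
    · have hxc := hcell x hxU' hxK
      obtain ⟨k, hk⟩ := (hzx.eventually ((cell_open hxc.1).mem_nhds hxc.2.1)).exists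
      refine ⟨k, ?_⟩
      rw [hlamcell _ hxc.1 _ hk, ← hlamcell _ hxc.1 x hxc.2.1]
      exact hlx
  -- lam is constantly U' on U'
  have hlamU' : ∀ x, x ∈ U' → lam x = U' := by
    by_contra hcon
    push_neg at hcon
    obtain ⟨x₀, hx₀U', hx₀⟩ := hcon
    set Z : Set (EuclideanSpace ℝ (Fin n)) := {x | x ∈ U' ∧ lam x = U'} with hZdef
    have hZne : Z.Nonempty := ⟨hUne.some, hsub hUne.some_mem, hlamU _ hUne.some_mem⟩
    have hZCne : (U' \ Z).Nonempty := ⟨x₀, hx₀U', fun h => hx₀ h.2⟩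
    have hclZ : ∀ x, x ∈ U' → x ∈ closure Z → x ∈ Z := by
      intro x hxU' hxcl
      obtain ⟨z, hzZ, hzx⟩ := mem_closure_iff_seq_limit.mp hxcl
      by_cases hxK : x ∈ c.K
      · have h1 := hmain x (subset_closure hxU') hxK z (fun k => (hzZ k).1) hzx
          (fun k => (hzZ k).2)
        have hFx : Fm c g x ∈ U' :=
          cell_mem_of_closure_notK hU' h1 (hFmnotK' x hxK (hU'K' x hxU'))
        exact ⟨hxU', by rw [hlamK _ hxK]; exact hU'comp _ hFx⟩
      · have hxc := hcell x hxU' hxK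
        obtain ⟨k, hk⟩ := (hzx.eventually ((cell_open hxc.1).mem_nhds hxc.2.1)).exists
        refine ⟨hxU', ?_⟩
        rw [hlamcell _ hxc.1 x hxc.2.1, ← hlamcell _ hxc.1 _ hk]
        exact (hzZ k).2
    have hclZC : ∀ x, x ∈ U' → x ∈ closure (U' \ Z) → x ∉ Z := by
      intro x hxU' hxcl hxZ
      obtain ⟨z, hzZ, hzx⟩ := mem_closure_iff_seq_limit.mp hxcl
      obtain ⟨k, hk⟩ := hmain2 x hxU' hxZ.2 z (fun k => (hzZ k).1) hzx
      exact (hzZ k).2 ⟨(hzZ k).1, hk⟩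
    obtain ⟨w, hwU', hw1, hw2⟩ := isPreconnected_closed_iff.mp hU'pre (closure Z)
      (closure (U' \ Z)) isClosed_closure isClosed_closure
      (fun u hu => by
        by_cases h : u ∈ Z
        · exact Or.inl (subset_closure h)
        · exact Or.inr (subset_closure ⟨hu, h⟩))
      ⟨hZne.some, hZne.some_mem.1, subset_closure hZne.some_mem⟩
      ⟨hZCne.some, hZCne.some_mem.1, subset_closure hZCne.some_mem⟩
    exact hclZC w hwU' hw2 (hclZ w hwU' hw1)
  -- conclusion
  intro x hxcl hxK
  obtain ⟨z, hzU', hzx⟩ := mem_closure_iff_seq_limit.mp hxcl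
  exact hmain x hxcl hxK z hzU' hzx (fun k => hlamU' _ (hzU' k))

end Stmt13Aux

/-- If the `G`-complex `c` is a refinement of the `G`-complex `c'` (i.e. `c'.K ⊆ c.K`
and the actions agree on `c'.K`), and `U ∈ 𝒰` is a cell of `c` contained in a cell
`U' ∈ 𝒰'` of `c'`, then `Stab_μ(U) ≤ Stab_{μ'}(U')`. -/
theorem stmt13 (n : ℕ) (G : Type*) [Group G] (c c' : GComplex n G)
    (hK : c'.K ⊆ c.K)
    (hagree : ∀ g : G, ∀ p : EuclideanSpace ℝ (Fin n), ∀ (hp : p ∈ c'.K) (hp2 : p ∈ c.K),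
      ((c.act g ⟨p, hp2⟩ : ↥c.K) : EuclideanSpace ℝ (Fin n)) =
        ((c'.act g ⟨p, hp⟩ : ↥c'.K) : EuclideanSpace ℝ (Fin n)))
    (U U' : Set (EuclideanSpace ℝ (Fin n))) (hU : U ∈ c.cells) (hU' : U' ∈ c'.cells)
    (hsub : U ⊆ U') :
    c.stab U ⊆ c'.stab U' := by
  intro g hg
  classical
  have hbU : closure U \ U ⊆ c.K := Stmt13Aux.cell_closure_diff hU
  have hbU' : closure U' \ U' ⊆ c'.K := Stmt13Aux.cell_closure_diff hU'
  have hFU : Stmt13Aux.Fm c g '' (closure U \ U) = closure U \ U := by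
    rw [← Stmt13Aux.subIm_eq_image c g hbU]
    exact hg
  have hFUi : Stmt13Aux.Fm c g⁻¹ '' (closure U \ U) = closure U \ U := by
    conv_lhs => rw [← hFU]
    rw [← Set.image_comp]
    have h3 : (Stmt13Aux.Fm c g⁻¹ ∘ Stmt13Aux.Fm c g) '' (closure U \ U) =
        id '' (closure U \ U) :=
      Set.image_congr (fun a ha => Stmt13Aux.Fm_inv c g (hbU ha))
    rw [h3, Set.image_id]
  have himg : ∀ g₀ : G, Stmt13Aux.Fm c g₀ '' (closure U \ U) = closure U \ U →
      Stmt13Aux.Fm c g₀ '' (closure U' \ U') ⊆ closure U' \ U' := by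
    intro g₀ hFU₀
    rintro y ⟨x, hx, rfl⟩
    have hxK' : x ∈ c'.K := hbU' hx
    have h1 : Stmt13Aux.Fm c g₀ x ∈ closure U' :=
      Stmt13Aux.key c c' hK hagree U U' hU hU' hsub g₀ hFU₀ x hx.1 (hK hxK')
    have h2 : Stmt13Aux.Fm c g₀ x ∈ c'.K := Stmt13Aux.Fm_memK' c c' hK hagree g₀ hxK'
    exact ⟨h1, fun h => (Stmt13Aux.cell_subset_dom hU' h).2 h2⟩
  have heq : Stmt13Aux.Fm c g '' (closure U' \ U') = closure U' \ U' := by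
    apply Set.Subset.antisymm (himg g hFU)
    intro y hy
    have h1 : Stmt13Aux.Fm c g⁻¹ y ∈ closure U' \ U' := himg g⁻¹ hFUi ⟨y, hy, rfl⟩
    refine ⟨Stmt13Aux.Fm c g⁻¹ y, h1, ?_⟩
    have h2 := Stmt13Aux.Fm_inv c g⁻¹ (hK (hbU' hy))
    rwa [inv_inv] at h2
  show subIm (c'.act g) (closure U' \ U') = closure U' \ U'
  have hcongr : Stmt13Aux.Fm c' g '' (closure U' \ U') = Stmt13Aux.Fm c g '' (closure U' \ U') :=
    Set.image_congr fun a ha => (Stmt13Aux.Fm_agree c c' hK hagree g (hbU' ha)).symm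
  rw [Stmt13Aux.subIm_eq_image c' g hbU', hcongr]
  exact heq
end

section
/- Let (K₁, 𝒰₁) and (K₂, 𝒰₂) be generalized cell decompositions of D^n, and for each V ∈ 𝒰₁ fix a homeomorphism Φ₁^V : (D^n, S^{n-1}) → (cl V, ∂V). Define 𝒰 = {Φ₁^V(W) : V ∈ 𝒰₁, W ∈ 𝒰₂} and K = K₁ ∪ ⋃_{V ∈ 𝒰₁} Φ₁^V(K₂). Then (K, 𝒰) is a generalized cell decomposition of D^n; in particular, every sequence of distinct elements of 𝒰 has a subsequence converging to a single point. -/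
/-- The image of a subset `S ⊆ α` under a homeomorphism `↥A ≃ₜ ↥B` of subtypes. -/
def homIm {α β : Type*} [TopologicalSpace α] [TopologicalSpace β] {A : Set α} {B : Set β} (φ : ↥A ≃ₜ ↥B) (S : Set α) : Set β :=
  Subtype.val '' (⇑φ '' (Subtype.val ⁻¹' S))

open Set Metric Topology Filter

section Helpers

variable {α β : Type*} [TopologicalSpace α] [TopologicalSpace β]

/-- A set is homeomorphic to its image under an embedding. -/
noncomputable def embHomeo {f : α → β} (hf : Topology.IsEmbedding f) (T : Set α) :
    ↥T ≃ₜ ↥(f '' T) :=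
  Equiv.toHomeomorphOfIsInducing (Equiv.Set.image f T hf.injective) <| by
    have hc : Continuous (fun x : ↥T => (⟨f x.1, Set.mem_image_of_mem f x.2⟩ : ↥(f '' T))) :=
      Continuous.subtype_mk (hf.continuous.comp continuous_subtype_val) _
    have key : Topology.IsInducing ((Subtype.val : ↥(f '' T) → β) ∘
        (fun x : ↥T => (⟨f x.1, Set.mem_image_of_mem f x.2⟩ : ↥(f '' T)))) := by
      have : ((Subtype.val : ↥(f '' T) → β) ∘
          (fun x : ↥T => (⟨f x.1, Set.mem_image_of_mem f x.2⟩ : ↥(f '' T))))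
          = f ∘ (Subtype.val : ↥T → α) := rfl
      rw [this]
      exact (hf.comp Topology.IsEmbedding.subtypeVal).isInducing
    exact Topology.IsInducing.of_comp hc continuous_subtype_val key

@[simp] lemma embHomeo_apply {f : α → β} (hf : Topology.IsEmbedding f) (T : Set α) (x : ↥T) :
    (embHomeo hf T x : β) = f x := rfl

variable {A : Set α} {B : Set β}

lemma mem_homIm {φ : ↥A ≃ₜ ↥B} {S : Set α} {y : β} :
    y ∈ homIm φ S ↔ ∃ a : ↥A, (a : α) ∈ S ∧ ((φ a : ↥B) : β) = y := by
  constructor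
  · rintro ⟨b, ⟨a, ha, rfl⟩, rfl⟩
    exact ⟨a, ha, rfl⟩
  · rintro ⟨a, ha, rfl⟩
    exact ⟨φ a, ⟨a, ha, rfl⟩, rfl⟩

lemma homIm_mono (φ : ↥A ≃ₜ ↥B) {S T : Set α} (h : S ⊆ T) : homIm φ S ⊆ homIm φ T := by
  intro y hy
  rcases mem_homIm.1 hy with ⟨a, ha, rfl⟩
  exact mem_homIm.2 ⟨a, h ha, rfl⟩

lemma homIm_subset (φ : ↥A ≃ₜ ↥B) (S : Set α) : homIm φ S ⊆ B := by
  intro y hy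
  rcases mem_homIm.1 hy with ⟨a, _, rfl⟩
  exact (φ a).2

lemma homIm_inter (φ : ↥A ≃ₜ ↥B) (S T : Set α) :
    homIm φ (S ∩ T) = homIm φ S ∩ homIm φ T := by
  unfold homIm
  rw [preimage_inter, image_inter (φ.injective), image_inter Subtype.val_injective]

lemma homIm_diff (φ : ↥A ≃ₜ ↥B) (S T : Set α) :
    homIm φ (S \ T) = homIm φ S \ homIm φ T := by
  unfold homIm
  rw [preimage_diff, image_diff (φ.injective), image_diff Subtype.val_injective]

lemma homIm_self (φ : ↥A ≃ₜ ↥B) : homIm φ A = B := by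
  unfold homIm
  have h1 : (Subtype.val ⁻¹' A : Set ↥A) = univ := by
    ext a; simpa using a.2
  rw [h1, image_univ]
  have h2 : range ⇑φ = univ := φ.toEquiv.range_eq_univ
  rw [h2, image_univ, Subtype.range_val]

lemma homIm_inter_A (φ : ↥A ≃ₜ ↥B) (S : Set α) : homIm φ (S ∩ A) = homIm φ S := by
  unfold homIm
  have : (Subtype.val ⁻¹' (S ∩ A) : Set ↥A) = Subtype.val ⁻¹' S := by
    ext a; simp [a.2]
  rw [this]

/-- `homIm` of a subset of `A` is homeomorphic to the subset. -/
noncomputable def homImHomeo (φ : ↥A ≃ₜ ↥B) (S : Set α) (hS : S ⊆ A) :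
    ↥S ≃ₜ ↥(homIm φ S) :=
  ((Homeomorph.setCongr (by rw [Subtype.image_preimage_coe]; exact (inter_eq_right.2 hS).symm)).trans
      ((embHomeo Topology.IsEmbedding.subtypeVal (Subtype.val ⁻¹' S)).symm)).trans <|
    ((Homeomorph.image φ (Subtype.val ⁻¹' S)).trans
      (embHomeo Topology.IsEmbedding.subtypeVal _))

end Helpers

variable {α β : Type*} [TopologicalSpace α] [TopologicalSpace β]

lemma homIm_closure {A : Set α} {B : Set β} (φ : ↥A ≃ₜ ↥B) (S : Set α) (hS : S ⊆ A)
    (hB : IsClosed B) : closure (homIm φ S) = homIm φ (closure S) := by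
  unfold homIm
  rw [hB.isClosedEmbedding_subtypeVal.closure_image_eq, ← Homeomorph.image_closure]
  congr 2
  rw [Topology.IsEmbedding.subtypeVal.closure_eq_preimage_closure_image,
    Subtype.image_preimage_coe, inter_eq_right.2 hS]

namespace GenCellDecomp

variable {n : ℕ} (d : GenCellDecomp n)

lemma compl_eq :
    Metric.closedBall (0 : EuclideanSpace ℝ (Fin n)) 1 \ d.K = Metric.ball 0 1 \ d.K := by
  ext x
  simp only [mem_diff, Metric.mem_closedBall, Metric.mem_ball]
  constructor
  · rintro ⟨h1, h2⟩
    refine ⟨lt_of_le_of_ne h1 fun h => h2 (d.sphere_subset ?_), h2⟩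
    simpa [Metric.mem_sphere] using h
  · rintro ⟨h1, h2⟩
    exact ⟨le_of_lt h1, h2⟩

lemma isOpen_compl' : IsOpen (Metric.closedBall (0 : EuclideanSpace ℝ (Fin n)) 1 \ d.K) := by
  rw [d.compl_eq, diff_eq]
  exact Metric.isOpen_ball.inter d.isClosed.isOpen_compl

lemma cell_subset {V : Set (EuclideanSpace ℝ (Fin n))} (hV : V ∈ d.cells) :
    V ⊆ Metric.closedBall (0 : EuclideanSpace ℝ (Fin n)) 1 \ d.K := by
  rw [d.cells_eq] at hV
  obtain ⟨x, _, rfl⟩ := hV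
  exact connectedComponentIn_subset _ _

lemma cell_isOpen {V : Set (EuclideanSpace ℝ (Fin n))} (hV : V ∈ d.cells) : IsOpen V := by
  rw [d.cells_eq] at hV
  obtain ⟨x, _, rfl⟩ := hV
  exact d.isOpen_compl'.connectedComponentIn

lemma cell_preconn {V : Set (EuclideanSpace ℝ (Fin n))} (hV : V ∈ d.cells) :
    IsPreconnected V := by
  rw [d.cells_eq] at hV
  obtain ⟨x, _, rfl⟩ := hV
  exact isPreconnected_connectedComponentIn

lemma cell_nonempty {V : Set (EuclideanSpace ℝ (Fin n))} (hV : V ∈ d.cells) : V.Nonempty := by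
  rw [d.cells_eq] at hV
  obtain ⟨x, hx, rfl⟩ := hV
  exact ⟨x, mem_connectedComponentIn hx⟩

lemma cell_of_mem {x : EuclideanSpace ℝ (Fin n)}
    (hx : x ∈ Metric.closedBall (0 : EuclideanSpace ℝ (Fin n)) 1 \ d.K) :
    connectedComponentIn (Metric.closedBall (0 : EuclideanSpace ℝ (Fin n)) 1 \ d.K) x ∈ d.cells
      ∧ x ∈ connectedComponentIn (Metric.closedBall (0 : EuclideanSpace ℝ (Fin n)) 1 \ d.K) x := by
  refine ⟨?_, mem_connectedComponentIn hx⟩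
  rw [d.cells_eq]
  exact ⟨x, hx, rfl⟩

lemma cells_eq_or_disjoint {V V' : Set (EuclideanSpace ℝ (Fin n))} (hV : V ∈ d.cells)
    (hV' : V' ∈ d.cells) : V = V' ∨ V ∩ V' = ∅ := by
  by_cases h : V ∩ V' = ∅
  · exact Or.inr h
  · left
    obtain ⟨z, hz, hz'⟩ := nonempty_iff_ne_empty.2 h
    rw [d.cells_eq] at hV hV'
    obtain ⟨x, _, rfl⟩ := hV
    obtain ⟨x', _, rfl⟩ := hV'
    rw [connectedComponentIn_eq hz, connectedComponentIn_eq hz']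

lemma closure_cell_inter {V V' : Set (EuclideanSpace ℝ (Fin n))} (hV : V ∈ d.cells)
    (hV' : V' ∈ d.cells) (hne : V ≠ V') : closure V' ∩ V = ∅ := by
  by_contra h
  obtain ⟨z, hz', hz⟩ := nonempty_iff_ne_empty.2 h
  obtain ⟨w, hw', hw⟩ := mem_closure_iff.1 hz' V (d.cell_isOpen hV) hz
  rcases d.cells_eq_or_disjoint hV hV' with h' | h'
  · exact hne h'
  · exact absurd h' (nonempty_iff_ne_empty.1 ⟨w, hw', hw⟩)

lemma cell_subset_ball {V : Set (EuclideanSpace ℝ (Fin n))} (hV : V ∈ d.cells) :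
    V ⊆ Metric.ball 0 1 := by
  intro x hx
  have := d.cell_subset hV hx
  rw [d.compl_eq] at this
  exact this.1

end GenCellDecomp

section OpenHelper

variable {α : Type*} [TopologicalSpace α]

lemma isOpen_val_image {A U : Set α} {T : Set ↥A} (hT : IsOpen T)
    (hTU : Subtype.val '' T ⊆ U) (hUA : U ⊆ A) (hU : IsOpen U) :
    IsOpen (Subtype.val '' T) := by
  obtain ⟨O, hO, rfl⟩ := isOpen_induced_iff.1 hT
  have him : Subtype.val '' ((Subtype.val : ↥A → α) ⁻¹' O) = A ∩ O :=
    Subtype.image_preimage_coe A O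
  rw [him] at hTU ⊢
  have : A ∩ O = U ∩ O := by
    ext x
    exact ⟨fun hx => ⟨hTU hx, hx.2⟩, fun hx => ⟨hUA hx.1, hx.2⟩⟩
  rw [this]
  exact hU.inter hO

end OpenHelper

section Refine

variable {n : ℕ} (d₁ d₂ : GenCellDecomp n)
    (Φ : (V : Set (EuclideanSpace ℝ (Fin n))) → V ∈ d₁.cells →
      (↥(Metric.closedBall (0 : EuclideanSpace ℝ (Fin n)) 1) ≃ₜ ↥(closure V)))
    (hΦ : ∀ (V : Set (EuclideanSpace ℝ (Fin n))) (hV : V ∈ d₁.cells),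
      homIm (Φ V hV) (Metric.sphere (0 : EuclideanSpace ℝ (Fin n)) 1) = closure V \ V)

include hΦ

lemma homIm_D {V : Set (EuclideanSpace ℝ (Fin n))} (hV : V ∈ d₁.cells) :
    homIm (Φ V hV) (Metric.closedBall (0 : EuclideanSpace ℝ (Fin n)) 1) = closure V :=
  homIm_self _

lemma homIm_ball {V : Set (EuclideanSpace ℝ (Fin n))} (hV : V ∈ d₁.cells) :
    homIm (Φ V hV) (Metric.ball (0 : EuclideanSpace ℝ (Fin n)) 1) = V := by
  have hsub : V ⊆ closure V := subset_closure
  rw [← Metric.closedBall_diff_sphere, homIm_diff, homIm_D d₁ Φ hΦ hV, hΦ V hV,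
    diff_diff_cancel_left hsub]

lemma piece_sub_cell {V W : Set (EuclideanSpace ℝ (Fin n))} (hV : V ∈ d₁.cells)
    (hW : W ∈ d₂.cells) : homIm (Φ V hV) W ⊆ V := by
  have h := homIm_mono (Φ V hV) (d₂.cell_subset_ball hW)
  rwa [homIm_ball d₁ Φ hΦ hV] at h

lemma piece_isOpen {V W : Set (EuclideanSpace ℝ (Fin n))} (hV : V ∈ d₁.cells)
    (hW : W ∈ d₂.cells) : IsOpen (homIm (Φ V hV) W) := by
  apply isOpen_val_image (U := V)
  · exact (Homeomorph.isOpenMap _) _ (continuous_subtype_val.isOpen_preimage _ (d₂.cell_isOpen hW))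
  · exact piece_sub_cell d₁ d₂ Φ hΦ hV hW
  · exact subset_closure
  · exact d₁.cell_isOpen hV

lemma piece_preconn {V W : Set (EuclideanSpace ℝ (Fin n))} (hV : V ∈ d₁.cells)
    (hW : W ∈ d₂.cells) : IsPreconnected (homIm (Φ V hV) W) := by
  have h0 : IsPreconnected ((Subtype.val : ↥(Metric.closedBall (0 : EuclideanSpace ℝ (Fin n)) 1)
      → EuclideanSpace ℝ (Fin n)) ⁻¹' W) := by
    rw [← Topology.IsInducing.subtypeVal.isPreconnected_image, Subtype.image_preimage_coe,
      inter_eq_right.2 (fun x hx => (d₂.cell_subset hW hx).1)]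
    exact d₂.cell_preconn hW
  have := (h0.image _ ((continuous_subtype_val.comp (Φ V hV).continuous).continuousOn))
  rwa [image_comp] at this

lemma piece_nonempty {V W : Set (EuclideanSpace ℝ (Fin n))} (hV : V ∈ d₁.cells)
    (hW : W ∈ d₂.cells) : (homIm (Φ V hV) W).Nonempty := by
  obtain ⟨w, hw⟩ := d₂.cell_nonempty hW
  exact ⟨_, mem_homIm.2 ⟨⟨w, (d₂.cell_subset hW hw).1⟩, hw, rfl⟩⟩

end Refine

section Extraction

variable {γ : Type*}

lemma exists_injective_subseq (V : ℕ → γ) (h : ∀ c : γ, {m | V m = c}.Finite) :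
    ∃ e : ℕ → ℕ, StrictMono e ∧ Function.Injective (V ∘ e) := by
  have key : ∀ (N : ℕ) (s : Finset γ), ∃ m, N < m ∧ V m ∉ s := by
    intro N s
    have hfin : {m | V m ∈ s}.Finite := by
      have : {m | V m ∈ s} = ⋃ c ∈ s, {m | V m = c} := by
        ext m; simp
      rw [this]
      exact s.finite_toSet.biUnion fun c _ => h c
    have hfin2 : ({m | V m ∈ s} ∪ Set.Iic N).Finite := hfin.union (finite_Iic N)
    obtain ⟨m, hm⟩ := hfin2.infinite_compl.nonempty
    rw [mem_compl_iff, mem_union, not_or] at hm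
    exact ⟨m, by simpa using hm.2, hm.1⟩
  classical
  choose f hf1 hf2 using key
  set g : ℕ × Finset γ → ℕ × Finset γ :=
    fun p => (f p.1 p.2, insert (V (f p.1 p.2)) p.2) with hg
  set a : ℕ → ℕ × Finset γ := fun k => g^[k] (0, {V 0}) with ha
  have ha0 : a 0 = (0, {V 0}) := rfl
  have hastep : ∀ k, a (k + 1) = g (a k) := by
    intro k
    simp only [ha, Function.iterate_succ_apply']
  set e : ℕ → ℕ := fun k => (a k).1 with he
  have hmono : ∀ k, e k < e (k + 1) := by
    intro k
    rw [he]
    simp only [hastep k, hg]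
    exact hf1 _ _
  have hsubs : ∀ k, (a k).2 ⊆ (a (k + 1)).2 := by
    intro k
    rw [hastep k, hg]
    exact Finset.subset_insert _ _
  have hmem : ∀ k, V (e k) ∈ (a k).2 := by
    intro k
    cases k with
    | zero =>
      show V ((a 0).1) ∈ (a 0).2
      rw [ha0]
      exact Finset.mem_singleton_self _
    | succ k =>
      show V ((a (k + 1)).1) ∈ (a (k + 1)).2
      rw [hastep k]
      exact Finset.mem_insert_self _ _
  have hmem2 : ∀ j k, j ≤ k → V (e j) ∈ (a k).2 := by
    intro j k hjk
    induction k with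
    | zero => rw [Nat.le_zero.1 hjk]; exact hmem 0
    | succ k ih =>
      rcases Nat.lt_succ_iff_lt_or_eq.1 (Nat.lt_succ_of_le hjk) with h' | h'
      · exact hsubs k (ih (Nat.lt_succ_iff.1 h'))
      · rw [h']; exact hmem _
  have hnotmem : ∀ k, V (e (k + 1)) ∉ (a k).2 := by
    intro k
    rw [he]
    simp only [hastep k, hg]
    exact hf2 _ _
  refine ⟨e, strictMono_nat_of_lt_succ hmono, ?_⟩
  intro i j hij
  have hij' : V (e i) = V (e j) := hij
  by_contra hne
  rcases Nat.lt_or_ge i j with h' | h'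
  · obtain ⟨m, rfl⟩ := Nat.exists_eq_add_of_lt h'
    exact hnotmem (i + m) (hij' ▸ hmem2 i (i + m) (Nat.le_add_right _ _))
  · rcases Nat.lt_or_ge j i with h'' | h''
    · obtain ⟨m, rfl⟩ := Nat.exists_eq_add_of_lt h''
      exact hnotmem (j + m) (hij'.symm ▸ hmem2 j (j + m) (Nat.le_add_right _ _))
    · exact hne (le_antisymm h'' h')

end Extraction

section Refine2

variable {n : ℕ} (d₁ d₂ : GenCellDecomp n)
    (Φ : (V : Set (EuclideanSpace ℝ (Fin n))) → V ∈ d₁.cells →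
      (↥(Metric.closedBall (0 : EuclideanSpace ℝ (Fin n)) 1) ≃ₜ ↥(closure V)))
    (hΦ : ∀ (V : Set (EuclideanSpace ℝ (Fin n))) (hV : V ∈ d₁.cells),
      homIm (Φ V hV) (Metric.sphere (0 : EuclideanSpace ℝ (Fin n)) 1) = closure V \ V)

/-- The refined bad set. -/
def refK : Set (EuclideanSpace ℝ (Fin n)) :=
  d₁.K ∪ (⋃ (V : ↥d₁.cells), homIm (Φ V.1 V.2) d₂.K)

lemma closure_cell_subset {V : Set (EuclideanSpace ℝ (Fin n))} (hV : V ∈ d₁.cells) :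
    closure V ⊆ Metric.closedBall (0 : EuclideanSpace ℝ (Fin n)) 1 :=
  closure_minimal (fun x hx => (d₁.cell_subset hV hx).1) Metric.isClosed_closedBall

lemma refK_subset : refK d₁ d₂ Φ ⊆ Metric.closedBall (0 : EuclideanSpace ℝ (Fin n)) 1 := by
  rintro x (hx | hx)
  · exact d₁.subset_ball hx
  · obtain ⟨s, ⟨V, rfl⟩, hxs⟩ := hx
    exact closure_cell_subset d₁ V.2 ((homIm_subset _ _) hxs)

lemma sphere_sub_refK :
    Metric.sphere (0 : EuclideanSpace ℝ (Fin n)) 1 ⊆ refK d₁ d₂ Φ :=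
  fun x hx => Or.inl (d₁.sphere_subset hx)

lemma piece_compact {V W : Set (EuclideanSpace ℝ (Fin n))} (hV : V ∈ d₁.cells)
    (hW : IsClosed W) (hWD : W ⊆ Metric.closedBall (0 : EuclideanSpace ℝ (Fin n)) 1) :
    IsCompact (homIm (Φ V hV) W) := by
  haveI : CompactSpace ↥(Metric.closedBall (0 : EuclideanSpace ℝ (Fin n)) 1) :=
    isCompact_iff_compactSpace.1 (isCompact_closedBall _ _)
  have h1 : IsCompact ((Subtype.val : ↥(Metric.closedBall (0 : EuclideanSpace ℝ (Fin n)) 1)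
      → EuclideanSpace ℝ (Fin n)) ⁻¹' W) :=
    (hW.preimage continuous_subtype_val).isCompact
  have h2 := (h1.image (Φ V hV).continuous).image continuous_subtype_val
  exact h2

end Refine2

section Refine3

variable {n : ℕ} (d₁ d₂ : GenCellDecomp n)
    (Φ : (V : Set (EuclideanSpace ℝ (Fin n))) → V ∈ d₁.cells →
      (↥(Metric.closedBall (0 : EuclideanSpace ℝ (Fin n)) 1) ≃ₜ ↥(closure V)))
    (hΦ : ∀ (V : Set (EuclideanSpace ℝ (Fin n))) (hV : V ∈ d₁.cells),
      homIm (Φ V hV) (Metric.sphere (0 : EuclideanSpace ℝ (Fin n)) 1) = closure V \ V)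

include hΦ

lemma piece_sub_compl {V W : Set (EuclideanSpace ℝ (Fin n))} (hV : V ∈ d₁.cells)
    (hW : W ∈ d₂.cells) :
    homIm (Φ V hV) W ⊆ Metric.closedBall (0 : EuclideanSpace ℝ (Fin n)) 1 \ refK d₁ d₂ Φ := by
  intro y hy
  have hyV : y ∈ V := piece_sub_cell d₁ d₂ Φ hΦ hV hW hy
  have hyD := d₁.cell_subset hV hyV
  refine ⟨hyD.1, ?_⟩
  rintro (hK | hK)
  · exact hyD.2 hK
  · obtain ⟨s, ⟨⟨V', hV'⟩, rfl⟩, hys⟩ := hK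
    by_cases hVV : V' = V
    · subst hVV
      have : y ∈ homIm (Φ V' hV') (d₂.K ∩ W) := by
        rw [homIm_inter]
        exact ⟨hys, hy⟩
      obtain ⟨a, ha, _⟩ := mem_homIm.1 this
      exact (d₂.cell_subset hW ha.2).2 ha.1
    · have h1 : y ∈ closure V' := by
        have := homIm_mono (Φ V' hV') (fun x hx => d₂.subset_ball hx)
        rw [homIm_D d₁ Φ hΦ hV'] at this
        exact this hys
      have h2 : closure V' ∩ V = ∅ := d₁.closure_cell_inter hV hV' (fun h => hVV h.symm)
      exact absurd h2 (nonempty_iff_ne_empty.1 ⟨y, h1, hyV⟩)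

lemma compl_refK_sub {x : EuclideanSpace ℝ (Fin n)}
    (hx : x ∈ Metric.closedBall (0 : EuclideanSpace ℝ (Fin n)) 1 \ refK d₁ d₂ Φ) :
    ∃ (V : Set (EuclideanSpace ℝ (Fin n))) (hV : V ∈ d₁.cells), ∃ W ∈ d₂.cells,
      x ∈ homIm (Φ V hV) W := by
  have hx1 : x ∈ Metric.closedBall (0 : EuclideanSpace ℝ (Fin n)) 1 \ d₁.K :=
    ⟨hx.1, fun h => hx.2 (Or.inl h)⟩
  obtain ⟨hV, hxV⟩ := d₁.cell_of_mem hx1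
  set V := connectedComponentIn (Metric.closedBall (0 : EuclideanSpace ℝ (Fin n)) 1 \ d₁.K) x
  have hxcl : x ∈ homIm (Φ V hV) (Metric.closedBall (0 : EuclideanSpace ℝ (Fin n)) 1) := by
    rw [homIm_D d₁ Φ hΦ hV]
    exact subset_closure hxV
  obtain ⟨a, _, ha2⟩ := mem_homIm.1 hxcl
  have haK : (a : EuclideanSpace ℝ (Fin n)) ∉ d₂.K := by
    intro h
    exact hx.2 (Or.inr (mem_iUnion.2 ⟨⟨V, hV⟩, mem_homIm.2 ⟨a, h, ha2⟩⟩))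
  have haD : (a : EuclideanSpace ℝ (Fin n)) ∈
      Metric.closedBall (0 : EuclideanSpace ℝ (Fin n)) 1 \ d₂.K := ⟨a.2, haK⟩
  obtain ⟨hW, haW⟩ := d₂.cell_of_mem haD
  exact ⟨V, hV, _, hW, mem_homIm.2 ⟨a, haW, ha2⟩⟩

lemma pieces_eq_or_disjoint {V V' W W' : Set (EuclideanSpace ℝ (Fin n))}
    (hV : V ∈ d₁.cells) (hV' : V' ∈ d₁.cells) (hW : W ∈ d₂.cells) (hW' : W' ∈ d₂.cells) :
    homIm (Φ V hV) W = homIm (Φ V' hV') W' ∨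
      homIm (Φ V hV) W ∩ homIm (Φ V' hV') W' = ∅ := by
  by_cases hVV : V = V'
  · subst hVV
    rcases d₂.cells_eq_or_disjoint hW hW' with h | h
    · subst h; exact Or.inl rfl
    · right
      rw [← homIm_inter, h]
      simp [homIm]
  · right
    apply eq_empty_of_forall_notMem
    rintro y ⟨hy1, hy2⟩
    rcases d₁.cells_eq_or_disjoint hV hV' with h | h
    · exact hVV h
    · have h1 : y ∈ V := piece_sub_cell d₁ d₂ Φ hΦ hV hW hy1
      have h2 : y ∈ V' := piece_sub_cell d₁ d₂ Φ hΦ hV' hW' hy2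
      exact absurd h (nonempty_iff_ne_empty.1 ⟨y, h1, h2⟩)

end Refine3

section Refine4

variable {n : ℕ} (d₁ d₂ : GenCellDecomp n)
    (Φ : (V : Set (EuclideanSpace ℝ (Fin n))) → V ∈ d₁.cells →
      (↥(Metric.closedBall (0 : EuclideanSpace ℝ (Fin n)) 1) ≃ₜ ↥(closure V)))
    (hΦ : ∀ (V : Set (EuclideanSpace ℝ (Fin n))) (hV : V ∈ d₁.cells),
      homIm (Φ V hV) (Metric.sphere (0 : EuclideanSpace ℝ (Fin n)) 1) = closure V \ V)

include hΦ

lemma piece_sub_closure {V : Set (EuclideanSpace ℝ (Fin n))} (hV : V ∈ d₁.cells)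
    (W : Set (EuclideanSpace ℝ (Fin n))) (hW : W ⊆ Metric.closedBall 0 1) :
    homIm (Φ V hV) W ⊆ closure V := by
  have := homIm_mono (Φ V hV) hW
  rwa [homIm_D d₁ Φ hΦ hV] at this

lemma refK_isClosed : IsClosed (refK d₁ d₂ Φ) := by
  apply IsSeqClosed.isClosed
  intro x p hxK hxp
  by_cases hfreq : {j | x j ∈ d₁.K}.Infinite
  · left
    have he := Nat.nth_strictMono hfreq
    exact d₁.isClosed.isSeqClosed (fun k => Nat.nth_mem_of_infinite hfreq k)
      (hxp.comp he.tendsto_atTop)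
  · have hinf : {j | x j ∈ ⋃ (V : ↥d₁.cells), homIm (Φ V.1 V.2) d₂.K}.Infinite := by
      apply Set.Infinite.mono (s := {j | x j ∈ d₁.K}ᶜ)
      · intro j hj
        rcases hxK j with h | h
        · exact absurd h hj
        · exact h
      · exact (Set.not_infinite.1 hfreq).infinite_compl
    set e := Nat.nth (· ∈ {j | x j ∈ ⋃ (V : ↥d₁.cells), homIm (Φ V.1 V.2) d₂.K}) with hee
    have hemono : StrictMono e := Nat.nth_strictMono hinf
    have hemem : ∀ k, x (e k) ∈ ⋃ (V : ↥d₁.cells), homIm (Φ V.1 V.2) d₂.K :=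
      fun k => Nat.nth_mem_of_infinite hinf k
    have hsel : ∀ k, ∃ V : ↥d₁.cells, x (e k) ∈ homIm (Φ V.1 V.2) d₂.K :=
      fun k => mem_iUnion.1 (hemem k)
    choose V hVmem using hsel
    by_cases hc : ∃ c : ↥d₁.cells, {k | V k = c}.Infinite
    · obtain ⟨c, hc⟩ := hc
      right
      apply mem_iUnion.2
      refine ⟨c, ?_⟩
      have he₂ := Nat.nth_strictMono hc
      have he₂mem : ∀ k, V (Nat.nth (· ∈ {k | V k = c}) k) = c :=
        fun k => Nat.nth_mem_of_infinite hc k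
      apply ((piece_compact d₁ Φ c.2 d₂.isClosed d₂.subset_ball).isClosed).isSeqClosed
        (x := fun k => x (e (Nat.nth (· ∈ {k | V k = c}) k)))
      · intro k
        have := hVmem (Nat.nth (· ∈ {k | V k = c}) k)
        rwa [he₂mem k] at this
      · exact hxp.comp ((hemono.comp he₂).tendsto_atTop)
    · push_neg at hc
      have hfin : ∀ c : ↥d₁.cells, {k | V k = c}.Finite :=
        fun c => hc c
      obtain ⟨e₃, he₃, hinj⟩ := exists_injective_subseq V hfin
      have hinj' : Function.Injective (fun k => ((V (e₃ k)) : Set (EuclideanSpace ℝ (Fin n)))) :=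
        fun i j h => hinj (Subtype.ext h)
      obtain ⟨φ₁, hφ₁, p₁, hsing⟩ := d₁.subconv (fun k => (V (e₃ k) : Set (EuclideanSpace ℝ (Fin n))))
        (fun k => (V (e₃ k)).2) hinj'
      -- pick approximating points inside the cells
      have happrox : ∀ k, ∃ y, y ∈ (V (e₃ (φ₁ k)) : Set (EuclideanSpace ℝ (Fin n))) ∧
          dist (x (e (e₃ (φ₁ k)))) y < 1 / (k + 1) := by
        intro k
        have hx1 : x (e (e₃ (φ₁ k))) ∈ closure (V (e₃ (φ₁ k)) : Set (EuclideanSpace ℝ (Fin n))) :=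
          piece_sub_closure d₁ Φ hΦ (V (e₃ (φ₁ k))).2 d₂.K d₂.subset_ball (hVmem _)
        have hpos : (0 : ℝ) < 1 / (k + 1) := by positivity
        obtain ⟨y, hy1, hy2⟩ := Metric.mem_closure_iff.1 hx1 _ hpos
        exact ⟨y, hy1, hy2⟩
      choose y hy1 hy2 using happrox
      have hxsub : Filter.Tendsto (fun k => x (e (e₃ (φ₁ k)))) atTop (nhds p) :=
        hxp.comp ((hemono.comp (he₃.comp hφ₁)).tendsto_atTop)
      have hdist : Filter.Tendsto (fun k => dist (x (e (e₃ (φ₁ k)))) (y k)) atTop (nhds 0) := by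
        apply squeeze_zero (fun k => dist_nonneg) (fun k => le_of_lt (hy2 k))
        exact tendsto_one_div_add_atTop_nhds_zero_nat
      have hytend : Filter.Tendsto y atTop (nhds p) := hxsub.congr_dist hdist
      have hpp₁ : p = p₁ := by
        have : p ∈ {q | ∃ z : ℕ → EuclideanSpace ℝ (Fin n),
            (∀ k, z k ∈ (fun k => (V (e₃ k) : Set (EuclideanSpace ℝ (Fin n)))) (φ₁ k)) ∧
            Filter.Tendsto z Filter.atTop (nhds q)} := ⟨y, hy1, hytend⟩
        rw [hsing] at this
        exact this
      left
      by_contra hp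
      have hpD : p ∈ Metric.closedBall (0 : EuclideanSpace ℝ (Fin n)) 1 :=
        Metric.isClosed_closedBall.isSeqClosed (fun j => refK_subset d₁ d₂ Φ (hxK j)) hxp
      have hpDK : p ∈ Metric.closedBall (0 : EuclideanSpace ℝ (Fin n)) 1 \ d₁.K := ⟨hpD, hp⟩
      obtain ⟨hV₀, hpV₀⟩ := d₁.cell_of_mem hpDK
      set V₀ := connectedComponentIn (Metric.closedBall (0 : EuclideanSpace ℝ (Fin n)) 1 \ d₁.K) p
      have hev : ∀ᶠ k in atTop, y k ∈ V₀ :=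
        hytend ((d₁.cell_isOpen hV₀).mem_nhds hpV₀)
      obtain ⟨N, hN⟩ := Filter.eventually_atTop.1 hev
      have key : ∀ k, N ≤ k → (V (e₃ (φ₁ k)) : Set (EuclideanSpace ℝ (Fin n))) = V₀ := by
        intro k hk
        rcases d₁.cells_eq_or_disjoint (V (e₃ (φ₁ k))).2 hV₀ with h | h
        · exact h
        · exact absurd h (nonempty_iff_ne_empty.1 ⟨y k, hy1 k, hN k hk⟩)
      have hVeq : (fun k => ((V (e₃ k)) : Set (EuclideanSpace ℝ (Fin n)))) (φ₁ N)
          = (fun k => ((V (e₃ k)) : Set (EuclideanSpace ℝ (Fin n)))) (φ₁ (N + 1)) := by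
        show ((V (e₃ (φ₁ N))) : Set (EuclideanSpace ℝ (Fin n)))
          = ((V (e₃ (φ₁ (N + 1)))) : Set (EuclideanSpace ℝ (Fin n)))
        rw [key N le_rfl, key (N + 1) (Nat.le_succ N)]
      have : φ₁ N = φ₁ (N + 1) := hinj' hVeq
      have := hφ₁.injective this
      omega

end Refine4

section Refine5

variable {n : ℕ} (d₁ d₂ : GenCellDecomp n)
    (Φ : (V : Set (EuclideanSpace ℝ (Fin n))) → V ∈ d₁.cells →
      (↥(Metric.closedBall (0 : EuclideanSpace ℝ (Fin n)) 1) ≃ₜ ↥(closure V)))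
    (hΦ : ∀ (V : Set (EuclideanSpace ℝ (Fin n))) (hV : V ∈ d₁.cells),
      homIm (Φ V hV) (Metric.sphere (0 : EuclideanSpace ℝ (Fin n)) 1) = closure V \ V)

include hΦ

lemma compl_piece_isOpen {V W : Set (EuclideanSpace ℝ (Fin n))} (hV : V ∈ d₁.cells)
    (hW : W ∈ d₂.cells) :
    IsOpen ((Metric.closedBall (0 : EuclideanSpace ℝ (Fin n)) 1 \ refK d₁ d₂ Φ)
      \ homIm (Φ V hV) W) := by
  rw [isOpen_iff_forall_mem_open]
  rintro z ⟨hz1, hz2⟩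
  obtain ⟨V', hV', W', hW', hz'⟩ := compl_refK_sub d₁ d₂ Φ hΦ hz1
  refine ⟨homIm (Φ V' hV') W', ?_, piece_isOpen d₁ d₂ Φ hΦ hV' hW', hz'⟩
  intro w hw
  refine ⟨piece_sub_compl d₁ d₂ Φ hΦ hV' hW' hw, ?_⟩
  intro hwC
  rcases pieces_eq_or_disjoint d₁ d₂ Φ hΦ (V := V') (V' := V) hV' hV hW' hW with h | h
  · exact hz2 (h ▸ hz')
  · exact absurd h (nonempty_iff_ne_empty.1 ⟨w, hw, hwC⟩)

lemma piece_eq_component {V W : Set (EuclideanSpace ℝ (Fin n))} (hV : V ∈ d₁.cells)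
    (hW : W ∈ d₂.cells) {x : EuclideanSpace ℝ (Fin n)} (hx : x ∈ homIm (Φ V hV) W) :
    homIm (Φ V hV) W = connectedComponentIn
      (Metric.closedBall (0 : EuclideanSpace ℝ (Fin n)) 1 \ refK d₁ d₂ Φ) x := by
  apply Subset.antisymm
  · exact (piece_preconn d₁ d₂ Φ hΦ hV hW).subset_connectedComponentIn hx
      (piece_sub_compl d₁ d₂ Φ hΦ hV hW)
  · by_contra hcon
    obtain ⟨z, hz1, hz2⟩ := not_subset.1 hcon
    have hpre : IsPreconnected (connectedComponentIn
        (Metric.closedBall (0 : EuclideanSpace ℝ (Fin n)) 1 \ refK d₁ d₂ Φ) x) :=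
      isPreconnected_connectedComponentIn
    have hccsub := connectedComponentIn_subset
      (Metric.closedBall (0 : EuclideanSpace ℝ (Fin n)) 1 \ refK d₁ d₂ Φ) x
    have h := hpre _ _ (piece_isOpen d₁ d₂ Φ hΦ hV hW) (compl_piece_isOpen d₁ d₂ Φ hΦ hV hW)
      (fun w hw => by
        by_cases h' : w ∈ homIm (Φ V hV) W
        · exact Or.inl h'
        · exact Or.inr ⟨hccsub hw, h'⟩)
      ⟨x, mem_connectedComponentIn (piece_sub_compl d₁ d₂ Φ hΦ hV hW hx), hx⟩
      ⟨z, hz1, hccsub hz1, hz2⟩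
    obtain ⟨w, _, hw2, _, hw4⟩ := h
    exact hw4 hw2

lemma refCells_description :
    {C | ∃ (V : Set (EuclideanSpace ℝ (Fin n))) (hV : V ∈ d₁.cells),
        ∃ W ∈ d₂.cells, C = homIm (Φ V hV) W}
      = {C | ∃ x ∈ Metric.closedBall (0 : EuclideanSpace ℝ (Fin n)) 1 \ refK d₁ d₂ Φ,
        C = connectedComponentIn
          (Metric.closedBall (0 : EuclideanSpace ℝ (Fin n)) 1 \ refK d₁ d₂ Φ) x} := by
  ext C
  constructor
  · rintro ⟨V, hV, W, hW, rfl⟩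
    obtain ⟨x, hx⟩ := piece_nonempty d₁ d₂ Φ hΦ hV hW
    exact ⟨x, piece_sub_compl d₁ d₂ Φ hΦ hV hW hx, piece_eq_component d₁ d₂ Φ hΦ hV hW hx⟩
  · rintro ⟨x, hx, rfl⟩
    obtain ⟨V, hV, W, hW, hx'⟩ := compl_refK_sub d₁ d₂ Φ hΦ hx
    exact ⟨V, hV, W, hW, (piece_eq_component d₁ d₂ Φ hΦ hV hW hx').symm⟩

end Refine5

section Refine6

variable {n : ℕ} (d₁ d₂ : GenCellDecomp n)
    (Φ : (V : Set (EuclideanSpace ℝ (Fin n))) → V ∈ d₁.cells →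
      (↥(Metric.closedBall (0 : EuclideanSpace ℝ (Fin n)) 1) ≃ₜ ↥(closure V)))
    (hΦ : ∀ (V : Set (EuclideanSpace ℝ (Fin n))) (hV : V ∈ d₁.cells),
      homIm (Φ V hV) (Metric.sphere (0 : EuclideanSpace ℝ (Fin n)) 1) = closure V \ V)

include hΦ

lemma ref_cell_int {V W : Set (EuclideanSpace ℝ (Fin n))} (hV : V ∈ d₁.cells)
    (hW : W ∈ d₂.cells) :
    Nonempty (↥(homIm (Φ V hV) W) ≃ₜ ↥(Metric.ball (0 : EuclideanSpace ℝ (Fin n)) 1)) := by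
  have hWD : W ⊆ Metric.closedBall (0 : EuclideanSpace ℝ (Fin n)) 1 :=
    fun x hx => (d₂.cell_subset hW hx).1
  obtain ⟨h2⟩ := d₂.cell_int W hW
  exact ⟨(homImHomeo (Φ V hV) W hWD).symm.trans h2⟩

lemma ref_cell_bdry {V W : Set (EuclideanSpace ℝ (Fin n))} (hV : V ∈ d₁.cells)
    (hW : W ∈ d₂.cells) :
    Nonempty (↥(closure (homIm (Φ V hV) W) \ homIm (Φ V hV) W)
      ≃ₜ ↥(Metric.sphere (0 : EuclideanSpace ℝ (Fin n)) 1)) := by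
  have hWD : W ⊆ Metric.closedBall (0 : EuclideanSpace ℝ (Fin n)) 1 :=
    fun x hx => (d₂.cell_subset hW hx).1
  have hclD : closure W ⊆ Metric.closedBall (0 : EuclideanSpace ℝ (Fin n)) 1 :=
    closure_minimal hWD Metric.isClosed_closedBall
  have hkey : closure (homIm (Φ V hV) W) \ homIm (Φ V hV) W
      = homIm (Φ V hV) (closure W \ W) := by
    rw [homIm_diff, homIm_closure (Φ V hV) W hWD isClosed_closure]
  obtain ⟨h2⟩ := d₂.cell_bdry W hW
  exact ⟨((Homeomorph.setCongr hkey).trans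
    (homImHomeo (Φ V hV) (closure W \ W) (diff_subset.trans hclD)).symm).trans h2⟩

lemma ref_subconv (U : ℕ → Set (EuclideanSpace ℝ (Fin n)))
    (hU : ∀ m, ∃ (V : ↥d₁.cells) (W : Set (EuclideanSpace ℝ (Fin n))),
      W ∈ d₂.cells ∧ U m = homIm (Φ V.1 V.2) W)
    (hinjU : Function.Injective U) :
    ∃ φ : ℕ → ℕ, StrictMono φ ∧ ∃ p,
      {q | ∃ x : ℕ → EuclideanSpace ℝ (Fin n), (∀ k, x k ∈ U (φ k)) ∧
        Filter.Tendsto x Filter.atTop (nhds q)} = {p} := by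
  choose V W hW hUeq using hU
  have hUsubV : ∀ m, U m ⊆ (V m : Set (EuclideanSpace ℝ (Fin n))) := by
    intro m
    rw [hUeq m]
    exact piece_sub_cell d₁ d₂ Φ hΦ (V m).2 (hW m)
  by_cases hc : ∃ c : ↥d₁.cells, {m | V m = c}.Infinite
  · obtain ⟨c, hc⟩ := hc
    set e := Nat.nth (· ∈ {m | V m = c}) with hedef
    have hemono : StrictMono e := Nat.nth_strictMono hc
    have hce : ∀ k, V (e k) = c := fun k => Nat.nth_mem_of_infinite hc k
    have hUe : ∀ k, U (e k) = homIm (Φ c.1 c.2) (W (e k)) := by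
      intro k
      rw [hUeq (e k), hce k]
    have hWinj : Function.Injective (fun k => W (e k)) := by
      intro i j h
      apply hemono.injective
      apply hinjU
      rw [hUe i, hUe j]
      exact congrArg _ h
    obtain ⟨ψ, hψ, p, hsing⟩ := d₂.subconv (fun k => W (e k)) (fun k => hW (e k)) hWinj
    have hpmem : p ∈ {q | ∃ z : ℕ → EuclideanSpace ℝ (Fin n),
        (∀ k, z k ∈ W (e (ψ k))) ∧ Filter.Tendsto z Filter.atTop (nhds q)} := by
      rw [hsing]; rfl
    obtain ⟨z, hz1, hz2⟩ := hpmem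
    have hzD : ∀ k, z k ∈ Metric.closedBall (0 : EuclideanSpace ℝ (Fin n)) 1 :=
      fun k => (d₂.cell_subset (hW (e (ψ k))) (hz1 k)).1
    have hpD : p ∈ Metric.closedBall (0 : EuclideanSpace ℝ (Fin n)) 1 :=
      Metric.isClosed_closedBall.isSeqClosed hzD hz2
    refine ⟨e ∘ ψ, hemono.comp hψ, ((Φ c.1 c.2) ⟨p, hpD⟩ : ↥(closure (c : Set _))).1, ?_⟩
    ext q
    simp only [mem_setOf_eq, mem_singleton_iff, Function.comp_apply]
    constructor
    · rintro ⟨x, hx1, hx2⟩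
      have hWsubD : ∀ k, W (e (ψ k)) ⊆ Metric.closedBall (0 : EuclideanSpace ℝ (Fin n)) 1 :=
        fun k y hy => (d₂.cell_subset (hW (e (ψ k))) hy).1
      have hxcl : ∀ k, x k ∈ closure (c : Set (EuclideanSpace ℝ (Fin n))) := by
        intro k
        apply piece_sub_closure d₁ Φ hΦ c.2 (W (e (ψ k))) (hWsubD k)
        rw [← hUe (ψ k)]
        exact hx1 k
      have hqcl : q ∈ closure (c : Set (EuclideanSpace ℝ (Fin n))) :=
        isClosed_closure.isSeqClosed hxcl hx2
      have hxt : Filter.Tendsto (fun k => (⟨x k, hxcl k⟩ : ↥(closure (c : Set _))))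
          atTop (nhds ⟨q, hqcl⟩) := tendsto_subtype_rng.2 hx2
      have h2 : Filter.Tendsto (fun k => ((Φ c.1 c.2).symm ⟨x k, hxcl k⟩))
          atTop (nhds ((Φ c.1 c.2).symm ⟨q, hqcl⟩)) :=
        ((Φ c.1 c.2).symm.continuous.tendsto _).comp hxt
      have h3 : Filter.Tendsto (fun k => (((Φ c.1 c.2).symm ⟨x k, hxcl k⟩ : ↥(Metric.closedBall
          (0 : EuclideanSpace ℝ (Fin n)) 1)) : EuclideanSpace ℝ (Fin n)))
          atTop (nhds (((Φ c.1 c.2).symm ⟨q, hqcl⟩ : ↥(Metric.closedBall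
          (0 : EuclideanSpace ℝ (Fin n)) 1)) : EuclideanSpace ℝ (Fin n))) :=
        (continuous_subtype_val.tendsto _).comp h2
      have hmem2 : ∀ k, (((Φ c.1 c.2).symm ⟨x k, hxcl k⟩ : ↥(Metric.closedBall
          (0 : EuclideanSpace ℝ (Fin n)) 1)) : EuclideanSpace ℝ (Fin n)) ∈ W (e (ψ k)) := by
        intro k
        have hxk := hx1 k
        rw [hUe (ψ k)] at hxk
        obtain ⟨a, ha1, ha2⟩ := mem_homIm.1 hxk
        have heq : (⟨x k, hxcl k⟩ : ↥(closure (c : Set _))) = (Φ c.1 c.2) a :=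
          Subtype.ext ha2.symm
        rw [heq, Homeomorph.symm_apply_apply]
        exact ha1
      have h4 : (((Φ c.1 c.2).symm ⟨q, hqcl⟩ : ↥(Metric.closedBall
          (0 : EuclideanSpace ℝ (Fin n)) 1)) : EuclideanSpace ℝ (Fin n)) ∈ ({p} : Set _) := by
        rw [← hsing]
        exact ⟨_, hmem2, h3⟩
      have h5 : (Φ c.1 c.2).symm ⟨q, hqcl⟩ = ⟨p, hpD⟩ := Subtype.ext h4
      have h6 := congrArg (Φ c.1 c.2) h5
      rw [Homeomorph.apply_symm_apply] at h6
      exact congrArg Subtype.val h6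
    · rintro rfl
      refine ⟨fun k => ((Φ c.1 c.2 ⟨z k, hzD k⟩ : ↥(closure (c : Set (EuclideanSpace ℝ (Fin n)))))
        : EuclideanSpace ℝ (Fin n)), ?_, ?_⟩
      · intro k
        rw [hUe (ψ k)]
        exact mem_homIm.2 ⟨⟨z k, hzD k⟩, hz1 k, rfl⟩
      · have hzt : Filter.Tendsto (fun k => (⟨z k, hzD k⟩ : ↥(Metric.closedBall
            (0 : EuclideanSpace ℝ (Fin n)) 1))) atTop (nhds ⟨p, hpD⟩) :=
          tendsto_subtype_rng.2 hz2
        exact (continuous_subtype_val.tendsto _).comp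
          (((Φ c.1 c.2).continuous.tendsto _).comp hzt)
  · push_neg at hc
    have hfin : ∀ c : ↥d₁.cells, {m | V m = c}.Finite :=
      fun c => hc c
    obtain ⟨e₃, he₃, hinj⟩ := exists_injective_subseq V hfin
    have hne : ∀ k, (U (e₃ k)).Nonempty := by
      intro k
      rw [hUeq (e₃ k)]
      exact piece_nonempty d₁ d₂ Φ hΦ (V (e₃ k)).2 (hW (e₃ k))
    choose u hu using hne
    have huD : ∀ k, u k ∈ Metric.closedBall (0 : EuclideanSpace ℝ (Fin n)) 1 :=
      fun k => (d₁.cell_subset (V (e₃ k)).2 (hUsubV _ (hu k))).1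
    obtain ⟨q, hqD, σ, hσ, hconv⟩ := (isCompact_closedBall (0 : EuclideanSpace ℝ (Fin n)) 1
      ).tendsto_subseq huD
    obtain ⟨φ₁, hφ₁, p, hsing⟩ := d₁.subconv
      (fun k => (V (e₃ (σ k)) : Set (EuclideanSpace ℝ (Fin n))))
      (fun k => (V (e₃ (σ k))).2)
      (fun i j h => hσ.injective (hinj (Subtype.ext h)))
    refine ⟨e₃ ∘ σ ∘ φ₁, he₃.comp (hσ.comp hφ₁), p, ?_⟩
    ext q'
    simp only [mem_setOf_eq, mem_singleton_iff, Function.comp_apply]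
    constructor
    · rintro ⟨x, hx1, hx2⟩
      have : q' ∈ {r | ∃ x : ℕ → EuclideanSpace ℝ (Fin n),
          (∀ k, x k ∈ (fun k => (V (e₃ (σ k)) : Set (EuclideanSpace ℝ (Fin n)))) (φ₁ k)) ∧
          Filter.Tendsto x Filter.atTop (nhds r)} :=
        ⟨x, fun k => hUsubV _ (hx1 k), hx2⟩
      rw [hsing] at this
      exact this
    · rintro rfl
      have hqp : q = q' := by
        have : q ∈ {r | ∃ x : ℕ → EuclideanSpace ℝ (Fin n),
            (∀ k, x k ∈ (fun k => (V (e₃ (σ k)) : Set (EuclideanSpace ℝ (Fin n)))) (φ₁ k)) ∧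
            Filter.Tendsto x Filter.atTop (nhds r)} :=
          ⟨fun k => u (σ (φ₁ k)), fun k => hUsubV _ (hu _),
            hconv.comp hφ₁.tendsto_atTop⟩
        rw [hsing] at this
        exact this
      exact ⟨fun k => u (σ (φ₁ k)), fun k => hu _, hqp ▸ hconv.comp hφ₁.tendsto_atTop⟩

end Refine6

/-- Refining one generalized cell decomposition by another.  Given generalized cell
decompositions `(K₁, 𝒰₁)` and `(K₂, 𝒰₂)` of `Dⁿ` and, for each cell `V ∈ 𝒰₁`, a
homeomorphism `Φ V : (Dⁿ, S^{n-1}) → (cl V, ∂V)`, the pair given by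
`K = K₁ ∪ ⋃_{V ∈ 𝒰₁} Φ V (K₂)` and `𝒰 = {Φ V (W) : V ∈ 𝒰₁, W ∈ 𝒰₂}` is again a
generalized cell decomposition of `Dⁿ`; in particular every sequence of distinct
elements of `𝒰` has a subsequence converging to a single point. -/
theorem stmt14 (n : ℕ) (d₁ d₂ : GenCellDecomp n)
    (Φ : (V : Set (EuclideanSpace ℝ (Fin n))) → V ∈ d₁.cells →
      (↥(Metric.closedBall (0 : EuclideanSpace ℝ (Fin n)) 1) ≃ₜ ↥(closure V)))
    (hΦ : ∀ (V : Set (EuclideanSpace ℝ (Fin n))) (hV : V ∈ d₁.cells),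
      homIm (Φ V hV) (Metric.sphere (0 : EuclideanSpace ℝ (Fin n)) 1) = closure V \ V) :
    ∃ d : GenCellDecomp n,
      d.K = d₁.K ∪ (⋃ (V : ↥d₁.cells), homIm (Φ V.1 V.2) d₂.K) ∧
      d.cells = {C | ∃ (V : Set (EuclideanSpace ℝ (Fin n))) (hV : V ∈ d₁.cells),
        ∃ W ∈ d₂.cells, C = homIm (Φ V hV) W} := by
  refine ⟨⟨refK d₁ d₂ Φ, refK_isClosed d₁ d₂ Φ hΦ, refK_subset d₁ d₂ Φ,
    sphere_sub_refK d₁ d₂ Φ,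
    {C | ∃ x ∈ Metric.closedBall (0 : EuclideanSpace ℝ (Fin n)) 1 \ refK d₁ d₂ Φ,
      C = connectedComponentIn
        (Metric.closedBall (0 : EuclideanSpace ℝ (Fin n)) 1 \ refK d₁ d₂ Φ) x},
    rfl, ?_, ?_, ?_⟩, rfl, (refCells_description d₁ d₂ Φ hΦ).symm⟩
  · intro U hU
    rw [← refCells_description d₁ d₂ Φ hΦ] at hU
    obtain ⟨V, hV, W, hW, rfl⟩ := hU
    exact ref_cell_int d₁ d₂ Φ hΦ hV hW
  · intro U hU
    rw [← refCells_description d₁ d₂ Φ hΦ] at hU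
    obtain ⟨V, hV, W, hW, rfl⟩ := hU
    exact ref_cell_bdry d₁ d₂ Φ hΦ hV hW
  · intro U hU hinj
    apply ref_subconv d₁ d₂ Φ hΦ U ?_ hinj
    intro m
    have := hU m
    rw [← refCells_description d₁ d₂ Φ hΦ] at this
    obtain ⟨V, hV, W, hW, hEq⟩ := this
    exact ⟨⟨V, hV⟩, W, hW, hEq⟩
end

section
/- There is an embedding of the (n-1)-triod Υ^{n-1} into the Sierpinski space M^n_{n-1} ⊆ I^n whose image is disjoint from every peripheral sphere. Concretely: if x₁ ∈ 𝒞 is not an endpoint of a complementary interval of the Cantor set 𝒞, then {x₁} × int(I^{n-1}) is contained in M^n_{n-1} and is disjoint from all peripheral spheres, and one can find inside M^n_{n-1} a closed (n-1)-disk together with an arc attached at an interior point, disjoint from all peripheral spheres. -/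
/-- The unit cube `Iⁿ` in `ℝⁿ` (with `n` coordinates indexed by `Fin n`). -/
def unitCube (n : ℕ) : Set (Fin n → ℝ) := {x | ∀ i, x i ∈ Set.Icc (0 : ℝ) 1}

/-- The Sierpinski space `M^n_{n-1} ⊆ Iⁿ`: points of the cube having at least one
coordinate in the middle-thirds Cantor set. -/
def sierpinskiCarpet (n : ℕ) : Set (Fin n → ℝ) :=
  {x ∈ unitCube n | ∃ i, x i ∈ cantorSet}

/-- The peripheral sphere of the complementary component of `M^n_{n-1}` in `Iⁿ`
containing the point `y`. -/
def peripheralSphere (n : ℕ) (y : Fin n → ℝ) : Set (Fin n → ℝ) :=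
  closure (connectedComponentIn (unitCube n \ sierpinskiCarpet n) y) \
    connectedComponentIn (unitCube n \ sierpinskiCarpet n) y

/-! ### Auxiliary facts about the Cantor set -/

lemma my_cantor_div_three {x : ℝ} (hx : x ∈ cantorSet) : x / 3 ∈ cantorSet := by
  rw [cantorSet, Set.mem_iInter] at hx ⊢
  intro n
  cases n with
  | zero =>
      have h0 := hx 0
      simp only [preCantorSet_zero, Set.mem_Icc] at h0 ⊢
      constructor <;> linarith [h0.1, h0.2]
  | succ n => exact Or.inl ⟨x, hx n, rfl⟩

lemma my_cantor_two_add_div_three {x : ℝ} (hx : x ∈ cantorSet) : (2 + x) / 3 ∈ cantorSet := by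
  rw [cantorSet, Set.mem_iInter] at hx ⊢
  intro n
  cases n with
  | zero =>
      have h0 := hx 0
      simp only [preCantorSet_zero, Set.mem_Icc] at h0 ⊢
      constructor <;> linarith [h0.1, h0.2]
  | succ n => exact Or.inr ⟨x, hx n, rfl⟩

lemma my_cantor_g {x : ℝ} (hx : x ∈ cantorSet) : (2 + x) / 9 ∈ cantorSet := by
  have := my_cantor_div_three (my_cantor_two_add_div_three hx)
  convert this using 1
  ring

lemma my_one_mem_cantorSet : (1 : ℝ) ∈ cantorSet := by
  rw [cantorSet, Set.mem_iInter]
  intro n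
  induction n with
  | zero => simp [preCantorSet]
  | succ n ih => exact Or.inr ⟨1, ih, by norm_num⟩

lemma my_tseq_mem (k : ℕ) : (1/4 - (1/4) * (1/9)^k : ℝ) ∈ cantorSet := by
  induction k with
  | zero => simpa using zero_mem_cantorSet
  | succ k ih =>
      have h := my_cantor_g ih
      convert h using 1
      ring

lemma my_sseq_mem (k : ℕ) : (1/4 + (3/4) * (1/9)^k : ℝ) ∈ cantorSet := by
  induction k with
  | zero =>
      have h : (1/4 + (3/4) * (1/9)^0 : ℝ) = 1 := by norm_num
      rw [h]; exact my_one_mem_cantorSet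
  | succ k ih =>
      have h := my_cantor_g ih
      convert h using 1
      ring

lemma my_approach_below {c : ℝ} (hc : c < 1/4) : ∃ z ∈ cantorSet, c < z ∧ z < 1/4 := by
  obtain ⟨k, hk⟩ := exists_pow_lt_of_lt_one (x := 4 * (1/4 - c)) (by linarith)
    (by norm_num : (1/9 : ℝ) < 1)
  have hp : (0:ℝ) < (1/9)^k := pow_pos (by norm_num) k
  exact ⟨_, my_tseq_mem k, by nlinarith, by nlinarith⟩

lemma my_approach_above {c : ℝ} (hc : 1/4 < c) : ∃ z ∈ cantorSet, 1/4 < z ∧ z < c := by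
  obtain ⟨k, hk⟩ := exists_pow_lt_of_lt_one (x := (4/3) * (c - 1/4)) (by linarith)
    (by norm_num : (1/9 : ℝ) < 1)
  have hp : (0:ℝ) < (1/9)^k := pow_pos (by norm_num) k
  exact ⟨_, my_sseq_mem k, by nlinarith, by nlinarith⟩

/-- A point of the Cantor set which is approached by Cantor points from both sides is not
in the closure of any complementary component. -/
lemma my_not_mem_closure_component {q : ℝ} (hq : q ∈ cantorSet)
    (hb : ∀ c, c < q → ∃ z ∈ cantorSet, c < z ∧ z < q)
    (ha : ∀ c, q < c → ∃ z ∈ cantorSet, q < z ∧ z < c) :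
    ∀ y ∈ Set.Icc (0:ℝ) 1 \ cantorSet,
      q ∉ closure (connectedComponentIn (Set.Icc (0:ℝ) 1 \ cantorSet) y) := by
  intro y hy hmem
  set C := connectedComponentIn (Set.Icc (0:ℝ) 1 \ cantorSet) y with hC
  have hyC : y ∈ C := mem_connectedComponentIn hy
  have hCsub : C ⊆ Set.Icc (0:ℝ) 1 \ cantorSet := connectedComponentIn_subset _ _
  have hqC : q ∉ C := fun h => (hCsub h).2 hq
  have hord : Set.OrdConnected C := isPreconnected_connectedComponentIn.ordConnected
  have hyq : y ≠ q := fun h => hqC (h ▸ hyC)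
  rcases lt_or_gt_of_ne hyq with h1 | h1
  · obtain ⟨z, hz, hz1, hz2⟩ := hb y h1
    have hCle : C ⊆ Set.Iic z := by
      intro c hc
      rw [Set.mem_Iic]
      by_contra hcz
      push_neg at hcz
      exact (hCsub (hord.out hyC hc ⟨le_of_lt hz1, le_of_lt hcz⟩)).2 hz
    exact absurd ((closure_minimal hCle isClosed_Iic) hmem) (not_le.mpr hz2)
  · obtain ⟨z, hz, hz1, hz2⟩ := ha y h1
    have hCle : C ⊆ Set.Ici z := by
      intro c hc
      rw [Set.mem_Ici]
      by_contra hcz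
      push_neg at hcz
      exact (hCsub (hord.out hc hyC ⟨le_of_lt hcz, le_of_lt hz2⟩)).2 hz
    exact absurd ((closure_minimal hCle isClosed_Ici) hmem) (not_le.mpr hz1)

/-- Key lemma: a point with `j`-th coordinate equal to such a Cantor point `q` is not in the
closure of any complementary component of the Sierpinski space. -/
lemma my_slice_avoid {m : ℕ} {q : ℝ}
    (hq' : ∀ y ∈ Set.Icc (0:ℝ) 1 \ cantorSet,
      q ∉ closure (connectedComponentIn (Set.Icc (0:ℝ) 1 \ cantorSet) y))
    (j : Fin m) {y : Fin m → ℝ} (hy : y ∈ unitCube m \ sierpinskiCarpet m)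
    {x : Fin m → ℝ} (hxj : x j = q) :
    x ∉ closure (connectedComponentIn (unitCube m \ sierpinskiCarpet m) y) := by
  intro hx
  set S := unitCube m \ sierpinskiCarpet m with hS
  set C := connectedComponentIn S y with hCdef
  have hCS : C ⊆ S := connectedComponentIn_subset _ _
  have hSj : ∀ z ∈ S, z j ∈ Set.Icc (0:ℝ) 1 \ cantorSet := by
    rintro z ⟨hz1, hz2⟩
    exact ⟨hz1 j, fun hc => hz2 ⟨hz1, j, hc⟩⟩
  have himg : (fun z : Fin m → ℝ => z j) '' C ⊆ Set.Icc (0:ℝ) 1 \ cantorSet := by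
    rintro _ ⟨z, hz, rfl⟩
    exact hSj z (hCS hz)
  have hconn : IsPreconnected ((fun z : Fin m → ℝ => z j) '' C) :=
    isPreconnected_connectedComponentIn.image _ (continuous_apply j).continuousOn
  have hsub2 : (fun z : Fin m → ℝ => z j) '' C ⊆
      connectedComponentIn (Set.Icc (0:ℝ) 1 \ cantorSet) (y j) :=
    hconn.subset_connectedComponentIn ⟨y, mem_connectedComponentIn hy, rfl⟩ himg
  have hxc : x j ∈ closure ((fun z : Fin m → ℝ => z j) '' C) :=
    image_closure_subset_closure_image (continuous_apply j) ⟨x, hx, rfl⟩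
  exact hq' (y j) (hSj y hy) (hxj ▸ closure_mono hsub2 hxc)

/-- There is an embedded `(n-1)`-triod in the Sierpinski space `M^n_{n-1}` (here with
`n + 2` in place of `n`, so `n ≥ 2`) disjoint from every peripheral sphere.
Concretely: (a) if `x₁ ∈ 𝒞` is not in the closure of any complementary interval of the
Cantor set, then the slice `{x₁} × int(I^{n-1})` lies in `M^n_{n-1}` and misses all
peripheral spheres; and (b) there is a closed `(n-1)`-disk together with an arc attached
at an interior point of the disk (meeting the disk exactly in that endpoint), contained
in `M^n_{n-1}` and disjoint from all peripheral spheres. -/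
theorem stmt17 (n : ℕ) (x₁ : ℝ) (hx₁ : x₁ ∈ cantorSet)
    (hx₁' : ∀ y ∈ Set.Icc (0 : ℝ) 1 \ cantorSet,
      x₁ ∉ closure (connectedComponentIn (Set.Icc (0 : ℝ) 1 \ cantorSet) y)) :
    ({x : Fin (n + 2) → ℝ | x 0 = x₁ ∧ ∀ i ≠ 0, x i ∈ Set.Ioo (0 : ℝ) 1} ⊆
        sierpinskiCarpet (n + 2) ∧
      ∀ y ∈ unitCube (n + 2) \ sierpinskiCarpet (n + 2),
        Disjoint {x : Fin (n + 2) → ℝ | x 0 = x₁ ∧ ∀ i ≠ 0, x i ∈ Set.Ioo (0 : ℝ) 1}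
          (peripheralSphere (n + 2) y)) ∧
    ∃ D A : Set (Fin (n + 2) → ℝ),
      D ∪ A ⊆ sierpinskiCarpet (n + 2) ∧
      (∀ y ∈ unitCube (n + 2) \ sierpinskiCarpet (n + 2),
        Disjoint (D ∪ A) (peripheralSphere (n + 2) y)) ∧
      ∃ (φ : ↥(Metric.closedBall (0 : EuclideanSpace ℝ (Fin (n + 1))) 1) ≃ₜ ↥D)
        (ψ : ↥(Set.Icc (0 : ℝ) 1) ≃ₜ ↥A),
        D ∩ A = {(ψ ⟨0, by norm_num⟩ : Fin (n + 2) → ℝ)} ∧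
        ∃ (c : EuclideanSpace ℝ (Fin (n + 1))) (hc : c ∈
            Metric.closedBall (0 : EuclideanSpace ℝ (Fin (n + 1))) 1), ‖c‖ < 1 ∧
          (φ ⟨c, hc⟩ : Fin (n + 2) → ℝ) = (ψ ⟨0, by norm_num⟩ : Fin (n + 2) → ℝ) := by
  have hx01 : x₁ ∈ Set.Icc (0:ℝ) 1 := cantorSet_subset_unitInterval hx₁
  have hq4' : ∀ y ∈ Set.Icc (0:ℝ) 1 \ cantorSet,
      (1/4 : ℝ) ∉ closure (connectedComponentIn (Set.Icc (0:ℝ) 1 \ cantorSet) y) :=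
    my_not_mem_closure_component quarter_mem_cantorSet (fun c hc => my_approach_below hc)
      (fun c hc => my_approach_above hc)
  have hhalf : x₁ ≠ (1/2 : ℝ) := by
    intro h
    have h1 : x₁ ∈ preCantorSet 1 := Set.mem_iInter.mp hx₁ 1
    rw [preCantorSet_succ, preCantorSet_zero] at h1
    rcases h1 with ⟨z, hz, hz2⟩ | ⟨z, hz, hz2⟩
    · rw [h] at hz2; have := hz.2; simp only at hz2; linarith
    · rw [h] at hz2; have := hz.1; simp only at hz2; linarith
  constructor
  · -- Part (a)
    constructor
    · intro x hx
      obtain ⟨hx0, hxr⟩ := hx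
      refine ⟨fun i => ?_, ⟨0, by rw [hx0]; exact hx₁⟩⟩
      by_cases hi : i = 0
      · subst hi; rw [hx0]; exact hx01
      · exact Set.Ioo_subset_Icc_self (hxr i hi)
    · intro y hy
      rw [Set.disjoint_left]
      intro x hxs hxp
      exact my_slice_avoid hx₁' 0 hy hxs.1 hxp.1
  · -- Part (b)
    set E := EuclideanSpace ℝ (Fin (n + 1)) with hE
    set e : E → (Fin (n + 2) → ℝ) :=
      fun u => Fin.cons x₁ (fun j => 1/4 + u j) with he
    set a : ℝ → (Fin (n + 2) → ℝ) :=
      fun t => Fin.cons (x₁ + t * (1/2 - x₁)) (fun _ => (1/4 : ℝ)) with ha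
    set K : Set E := {u | ∀ j, |u j| ≤ 1/4} with hKdef
    -- basic properties
    have he_cont : Continuous e := by
      refine continuous_pi fun i => ?_
      refine Fin.cases ?_ (fun j => ?_) i
      · simp only [he, Fin.cons_zero]; exact continuous_const
      · simp only [he, Fin.cons_succ]
        exact continuous_const.add (PiLp.continuous_apply 2 _ j)
    have he_inj : Function.Injective e := by
      intro u v huv
      refine PiLp.ext fun j => ?_
      have h := congrFun huv j.succ
      simp only [he, Fin.cons_succ] at h
      linarith
    have ha_cont : Continuous a := by
      refine continuous_pi fun i => ?_
      refine Fin.cases ?_ (fun j => ?_) i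
      · simp only [ha, Fin.cons_zero]
        exact continuous_const.add (continuous_id.mul continuous_const)
      · simp only [ha, Fin.cons_succ]; exact continuous_const
    have ha_inj : Function.Injective a := by
      intro s t hst
      have h0 := congrFun hst 0
      simp only [ha, Fin.cons_zero] at h0
      have hc : (1/2 - x₁ : ℝ) ≠ 0 := sub_ne_zero.mpr (Ne.symm hhalf)
      have h1 : s * (1/2 - x₁) = t * (1/2 - x₁) := by linarith
      exact mul_right_cancel₀ hc h1
    have hK_closed : IsClosed K := by
      have : K = ⋂ j, (fun u : E => u j) ⁻¹' (Set.Icc (-(1/4) : ℝ) (1/4)) := by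
        ext u
        simp [hKdef, abs_le, Set.mem_iInter]
      rw [this]
      exact isClosed_iInter fun j => isClosed_Icc.preimage (PiLp.continuous_apply 2 _ j)
    have hK_conv : Convex ℝ K := by
      intro u hu v hv s t hs ht hst
      intro j
      have hj : (s • u + t • v) j = s * u j + t * v j := rfl
      rw [hj]
      calc |s * u j + t * v j| ≤ |s * u j| + |t * v j| := abs_add_le _ _
        _ ≤ s * (1/4) + t * (1/4) := by
            rw [abs_mul, abs_mul, abs_of_nonneg hs, abs_of_nonneg ht]
            gcongr
            exacts [hu j, hv j]
        _ = 1/4 := by linarith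
    have habs : ∀ (u : E) (j : Fin (n + 1)), |u j| ≤ ‖u‖ := by
      intro u j
      rw [EuclideanSpace.norm_eq]
      have h1 : |u j| ^ 2 ≤ ∑ i, ‖u i‖ ^ 2 := by
        have := Finset.single_le_sum (f := fun i => ‖u i‖ ^ 2)
          (fun i _ => sq_nonneg _) (Finset.mem_univ j)
        simpa [Real.norm_eq_abs, sq_abs] using this
      calc |u j| = Real.sqrt (|u j| ^ 2) := by rw [Real.sqrt_sq_eq_abs, abs_abs]
        _ ≤ _ := Real.sqrt_le_sqrt h1
    have hK_nhds : K ∈ nhds (0 : E) := by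
      refine Filter.mem_of_superset (Metric.ball_mem_nhds 0 (by norm_num : (0:ℝ) < 1/4)) ?_
      intro u hu j
      exact (habs u j).trans (le_of_lt (mem_ball_zero_iff.mp hu))
    have hK_sub : K ⊆ Metric.closedBall (0 : E) ((n : ℝ) + 1) := by
      intro u hu
      rw [Metric.mem_closedBall, dist_zero_right, EuclideanSpace.norm_eq]
      have h1 : ∑ i, ‖u i‖ ^ 2 ≤ ∑ _i : Fin (n + 1), (1 : ℝ) := by
        refine Finset.sum_le_sum fun i _ => ?_
        have h := hu i
        rw [Real.norm_eq_abs]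
        nlinarith [abs_nonneg (u i)]
      have h2 : (∑ _i : Fin (n + 1), (1 : ℝ)) = (n : ℝ) + 1 := by
        simp
      have hn : (0:ℝ) ≤ (n : ℝ) + 1 := by positivity
      calc Real.sqrt (∑ i, ‖u i‖ ^ 2) ≤ Real.sqrt ((n : ℝ) + 1) := by
            apply Real.sqrt_le_sqrt; rw [← h2]; exact h1
        _ ≤ (n : ℝ) + 1 := by
            nlinarith [Real.sq_sqrt hn, Real.sqrt_nonneg ((n:ℝ) + 1),
              sq_nonneg (Real.sqrt ((n:ℝ) + 1) - 1)]
    have hK_compact : IsCompact K :=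
      (isCompact_closedBall _ _).of_isClosed_subset hK_closed hK_sub
    have hK_vb : Bornology.IsVonNBounded ℝ K :=
      NormedSpace.isVonNBounded_of_isBounded _ (Metric.isBounded_closedBall.subset hK_sub)
    have hB_conv : Convex ℝ (Metric.closedBall (0 : E) 1) := convex_closedBall 0 1
    have hB_nhds : Metric.closedBall (0 : E) 1 ∈ nhds (0 : E) :=
      Metric.closedBall_mem_nhds 0 (by norm_num)
    have hB_vb : Bornology.IsVonNBounded ℝ (Metric.closedBall (0 : E) 1) :=
      NormedSpace.isVonNBounded_of_isBounded _ Metric.isBounded_closedBall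
    set h : E ≃ₜ E :=
      gaugeRescaleHomeomorph (Metric.closedBall 0 1) K hB_conv hB_nhds hB_vb
        hK_conv hK_nhds hK_vb with hh
    have himg : h '' Metric.closedBall (0 : E) 1 = K := by
      have := image_gaugeRescaleHomeomorph_closure hB_conv hB_nhds hB_vb hK_conv hK_nhds hK_vb
      rwa [Metric.isClosed_closedBall.closure_eq, hK_closed.closure_eq] at this
    have h0 : h 0 = 0 := gaugeRescale_zero _ _
    -- membership of K
    have h0K : (0 : E) ∈ K := fun j => by
      have : (0 : E) j = 0 := rfl
      rw [this]; norm_num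
    -- e 0 = a 0
    have hea : e 0 = a 0 := by
      funext i
      refine Fin.cases ?_ (fun j => ?_) i
      · simp only [he, ha, Fin.cons_zero]; ring
      · have hz : (0 : E) j = 0 := rfl
        simp only [he, ha, Fin.cons_succ, hz]; ring
    -- the homeomorphisms
    haveI : CompactSpace ↥K := isCompact_iff_compactSpace.mp hK_compact
    haveI : CompactSpace ↥(Set.Icc (0:ℝ) 1) := isCompact_iff_compactSpace.mp isCompact_Icc
    let φ₃ : ↥K ≃ₜ ↥(e '' K) :=
      Continuous.homeoOfEquivCompactToT2 (f := Equiv.Set.image e K he_inj)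
        ((he_cont.comp continuous_subtype_val).subtype_mk _)
    let φ : ↥(Metric.closedBall (0 : E) 1) ≃ₜ ↥(e '' K) :=
      ((h.image _).trans (Homeomorph.setCongr himg)).trans φ₃
    let ψ : ↥(Set.Icc (0:ℝ) 1) ≃ₜ ↥(a '' Set.Icc 0 1) :=
      Continuous.homeoOfEquivCompactToT2 (f := Equiv.Set.image a _ ha_inj)
        ((ha_cont.comp continuous_subtype_val).subtype_mk _)
    have hψ0 : ((ψ ⟨0, by norm_num⟩ : ↥(a '' Set.Icc 0 1)) : Fin (n + 2) → ℝ) = a 0 := rfl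
    refine ⟨e '' K, a '' Set.Icc 0 1, ?_, ?_, φ, ψ, ?_, 0,
      Metric.mem_closedBall_self (by norm_num), by simp, ?_⟩
    · -- D ∪ A ⊆ carpet
      rintro x (⟨u, hu, rfl⟩ | ⟨t, ht, rfl⟩)
      · refine ⟨fun i => ?_, ⟨0, by simp only [he, Fin.cons_zero]; exact hx₁⟩⟩
        refine Fin.cases ?_ (fun j => ?_) i
        · simp only [he, Fin.cons_zero]; exact hx01
        · have hj := hu j
          rw [abs_le] at hj
          simp only [he, Fin.cons_succ, Set.mem_Icc]
          constructor <;> linarith [hj.1, hj.2]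
      · refine ⟨fun i => ?_, ⟨Fin.succ 0, by
          simp only [ha, Fin.cons_succ]; exact quarter_mem_cantorSet⟩⟩
        refine Fin.cases ?_ (fun j => ?_) i
        · simp only [ha, Fin.cons_zero, Set.mem_Icc]
          obtain ⟨ht0, ht1⟩ := ht
          constructor <;> nlinarith [hx01.1, hx01.2]
        · simp only [ha, Fin.cons_succ, Set.mem_Icc]; norm_num
    · -- disjoint from peripheral spheres
      intro y hy
      rw [Set.disjoint_left]
      rintro x (⟨u, hu, rfl⟩ | ⟨t, ht, rfl⟩) hxp
      · exact my_slice_avoid hx₁' 0 hy (by simp only [he, Fin.cons_zero]) hxp.1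
      · exact my_slice_avoid hq4' (Fin.succ 0) hy (by simp only [ha, Fin.cons_succ]) hxp.1
    · -- D ∩ A = {ψ 0}
      rw [hψ0]
      apply Set.Subset.antisymm
      · rintro x ⟨⟨u, hu, hux⟩, ⟨t, ht, htx⟩⟩
        have hx0 : x 0 = x₁ := by rw [← hux]; simp only [he, Fin.cons_zero]
        have hx0' : x 0 = x₁ + t * (1/2 - x₁) := by rw [← htx]; simp only [ha, Fin.cons_zero]
        have hc : (1/2 - x₁ : ℝ) ≠ 0 := sub_ne_zero.mpr (Ne.symm hhalf)
        have ht0 : t = 0 := by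
          have h1 : t * (1/2 - x₁) = 0 := by rw [hx0] at hx0'; linarith
          rcases mul_eq_zero.mp h1 with h' | h'
          · exact h'
          · exact absurd h' hc
        rw [← htx, ht0]
        exact Set.mem_singleton _
      · intro x hx
        rw [Set.mem_singleton_iff] at hx
        subst hx
        exact ⟨⟨0, h0K, hea⟩, ⟨0, by norm_num, rfl⟩⟩
    · -- φ 0 = ψ 0
      rw [hψ0]
      show e (h 0) = a 0
      rw [h0, hea]
end
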